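/- arXiv:1702.00385 — 5 statements merged into one kernel-verified Lean document; each statement's English description precedes it below -/
import Mathlib

section
/- Quasi-commutation of distant Artin generators (part of Theorem 6.1): Let k ≥ 4, r ≥ 2, n = rk, and let i satisfy 3 ≤ i ≤ k−1. For every index j ∈ ZMod n there exist a sign ε_j ∈ {+1, −1} and a Laurent monomial M_j in the frozen minors (both independent of v) such that for every generic configuration v : ZMod n → (Fin k → ℂ), the j-th vector of σ_i(σ_1(v)) equals ε_j · M_j(v) · (the j-th vector of σ_1(σ_i(v))). In other words, σ_i ∘ σ_1 and σ_1 ∘ σ_i agree componentwise up to signs and Laurent monomials in the frozen minors. -/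
open scoped BigOperators

noncomputable section

/-- Determinant of the `k × k` matrix whose `b`-th column is `c b`. -/
def colDet {k : ℕ} (c : Fin k → Fin k → ℂ) : ℂ :=
  Matrix.det (Matrix.of fun a b => c b a)

/-- The frozen Plücker minor `Δ_m(v)`, on the `k` cyclically consecutive
columns starting at `m`. -/
def frozen (k n : ℕ) (v : ZMod n → Fin k → ℂ) (m : ZMod n) : ℂ :=
  colDet (fun b : Fin k => v (m + ((b : ℕ) : ZMod n)))

/-- A configuration is generic if all frozen minors are nonzero. -/
def Generic (k n : ℕ) (v : ZMod n → Fin k → ℂ) : Prop :=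
  ∀ m : ZMod n, frozen k n v m ≠ 0

/-- The Laurent monomial `∏_m Δ_m(v)^(e m)` in the frozen minors. -/
def laurent (k n : ℕ) (e : Fin n → ℤ) (v : ZMod n → Fin k → ℂ) : ℂ :=
  ∏ m : Fin n, frozen k n v ((m : ℕ) : ZMod n) ^ e m

/-- The Artin generator `σ_i` acting on configurations. -/
def artin (k n i : ℕ) (v : ZMod n → Fin k → ℂ) : ZMod n → Fin k → ℂ :=
  fun j =>
    if (ZMod.val j) % k = i % k then v (j + 1)
    else if (ZMod.val j) % k = (i + 1) % k then
      (colDet (fun b : Fin k =>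
          if (b : ℕ) = 0 then v (j - 1) else v (j + ((b : ℕ) : ZMod n)))) • v j
        - (frozen k n v j) • v (j - 1)
    else v j

/-- `artinComp k n i v = σ_i (σ_{i-1} (⋯ (σ_1 v)))`. -/
def artinComp (k n : ℕ) : ℕ → (ZMod n → Fin k → ℂ) → ZMod n → Fin k → ℂ
  | 0, v => v
  | m + 1, v => artin k n (m + 1) (artinComp k n m v)

/-- `artinCompRev k n i v = σ_1 (σ_2 (⋯ (σ_i v)))`. -/
def artinCompRev (k n : ℕ) : ℕ → (ZMod n → Fin k → ℂ) → ZMod n → Fin k → ℂ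
  | 0, v => v
  | m + 1, v => artinCompRev k n m (artin k n (m + 1) v)

/-- The degree-one Grassmann–Cayley meet
`(a_1 ⋯ a_p) ∩ (b_1 ⋯ b_q)` (intended for `p + q = k + 1`):
`Σ_{i=1}^{p} (−1)^{p−i} · det(a_1 | ⋯ | â_i | ⋯ | a_p | b_1 | ⋯ | b_q) · a_i`. -/
def gcMeet {k p q : ℕ} (a : Fin p → Fin k → ℂ) (b : Fin q → Fin k → ℂ) : Fin k → ℂ :=
  ∑ i : Fin p, ((-1 : ℂ) ^ (p - 1 - (i : ℕ)) *
    colDet (fun c : Fin k =>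
      if hc : (c : ℕ) < p - 1 then
        (if hci : (c : ℕ) < (i : ℕ) then a ⟨(c : ℕ), Nat.lt_trans hci i.isLt⟩
         else a ⟨(c : ℕ) + 1, by have := i.isLt; omega⟩)
      else if hq : (c : ℕ) - (p - 1) < q then b ⟨(c : ℕ) - (p - 1), hq⟩ else 0)) • a i




namespace QC

lemma colDet_rows {k : ℕ} (c : Fin k → Fin k → ℂ) : colDet c = Matrix.det (Matrix.of c) := by
  rw [colDet, show (Matrix.of fun a b => c b a) = Matrix.transpose (Matrix.of c) from rfl,
    Matrix.det_transpose]

lemma colDet_pair {k : ℕ} (c c' : Fin k → Fin k → ℂ) (t t' : Fin k) (htt : t ≠ t')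
    (B D : ℂ) (h1 : c' t = c t') (h2 : c' t' = B • c t' - D • c t)
    (h3 : ∀ b, b ≠ t → b ≠ t' → c' b = c b) :
    colDet c' = D * colDet c := by
  rw [colDet_rows, colDet_rows]
  have hM : Matrix.of c' =
      Matrix.updateRow (Matrix.updateRow (Matrix.of c) t (c t')) t' (B • c t' + (-D) • c t) := by
    ext a b
    rcases eq_or_ne a t' with rfl | ha'
    · rw [Matrix.updateRow_self]
      simp only [Matrix.of_apply, h2, Pi.add_apply, Pi.smul_apply, Pi.sub_apply, smul_eq_mul,
        neg_mul, neg_smul, Pi.neg_apply]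
      ring
    · rw [Matrix.updateRow_ne ha']
      rcases eq_or_ne a t with rfl | ha
      · rw [Matrix.updateRow_self]; exact congrFun h1 b
      · rw [Matrix.updateRow_ne ha]; exact congrFun (h3 a ha ha') b
  rw [hM, Matrix.det_updateRow_add, Matrix.det_updateRow_smul, Matrix.det_updateRow_smul]
  have hz : ((Matrix.of c).updateRow t (c t')|>.updateRow t' (c t')).det = 0 := by
    apply Matrix.det_zero_of_row_eq htt
    rw [Matrix.updateRow_ne htt, Matrix.updateRow_self, Matrix.updateRow_self]
  have hs : ((Matrix.of c).updateRow t (c t')|>.updateRow t' (c t)).det = - (Matrix.of c).det := by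
    have he : ((Matrix.of c).updateRow t (c t')|>.updateRow t' (c t))
        = (Matrix.of c).submatrix (Equiv.swap t t') id := by
      ext a b
      rcases eq_or_ne a t' with rfl | ha'
      · simp [Matrix.updateRow_self, Equiv.swap_apply_right]
      · rw [Matrix.updateRow_ne ha']
        rcases eq_or_ne a t with rfl | ha
        · simp [Matrix.updateRow_self, Equiv.swap_apply_left]
        · rw [Matrix.updateRow_ne ha]
          simp [Equiv.swap_apply_of_ne_of_ne ha ha']
    rw [he, Matrix.det_permute, Equiv.Perm.sign_swap htt]
    simp
  rw [hz, hs]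
  ring

lemma mod_two_mul {x k : ℕ} (h : x < 2 * k) : x % k = if x < k then x else x - k := by
  split_ifs with hx
  · exact Nat.mod_eq_of_lt hx
  · rw [Nat.mod_eq_sub_mod (by omega)]
    exact Nat.mod_eq_of_lt (by omega)

lemma mod_eq_mod_iff {x y k : ℕ} (hx : x < 2 * k) (hy : y < 2 * k) :
    x % k = y % k ↔ (x = y ∨ x + k = y ∨ y + k = x) := by
  rw [mod_two_mul hx, mod_two_mul hy]
  split_ifs <;> omega

lemma val_add_cast {n k : ℕ} [NeZero n] (hd : k ∣ n) (j : ZMod n) (m : ℕ) :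
    (j + (m : ZMod n)).val % k = (j.val + m) % k := by
  rw [ZMod.val_add, ZMod.val_natCast, Nat.mod_mod_of_dvd _ hd]
  conv_lhs => rw [Nat.add_mod, Nat.mod_mod_of_dvd _ hd, ← Nat.add_mod]

lemma sub_one_eq_add {n : ℕ} (hn : 1 ≤ n) (j : ZMod n) :
    j - 1 = j + ((n - 1 : ℕ) : ZMod n) := by
  have : ((n - 1 : ℕ) : ZMod n) = -1 := by
    rw [Nat.cast_sub hn, Nat.cast_one, ZMod.natCast_self, zero_sub]
  rw [this]; ring

lemma val_sub_one {n k r : ℕ} [NeZero n] (hk : 0 < k) (hr : 0 < r) (hn : n = r * k) (j : ZMod n) :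
    (j - 1).val % k = (j.val + (k - 1)) % k := by
  have hd : k ∣ n := hn ▸ Dvd.intro_left r rfl
  have hn1 : 1 ≤ n := by subst hn; exact Nat.one_le_iff_ne_zero.mpr (by positivity)
  rw [sub_one_eq_add hn1, val_add_cast hd]
  have h1 : n - 1 = (r - 1) * k + (k - 1) := by
    subst hn; cases r with | zero => omega | succ r => simp [Nat.succ_mul]; omega
  rw [h1]
  calc (j.val + ((r - 1) * k + (k - 1))) % k = (j.val + (k - 1) + (r - 1) * k) % k := by ring_nf
    _ = (j.val + (k - 1)) % k := Nat.add_mul_mod_self_right _ _ _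

lemma artin_one {k n i : ℕ} (v : ZMod n → Fin k → ℂ) (j : ZMod n)
    (h : (ZMod.val j) % k = i % k) :
    artin k n i v j = v (j + 1) := by
  simp only [artin]; rw [if_pos h]

lemma artin_two {k n i : ℕ} (v : ZMod n → Fin k → ℂ) (j : ZMod n)
    (h1 : ¬ (ZMod.val j) % k = i % k) (h2 : (ZMod.val j) % k = (i + 1) % k) :
    artin k n i v j =
      (colDet (fun b : Fin k =>
          if (b : ℕ) = 0 then v (j - 1) else v (j + ((b : ℕ) : ZMod n)))) • v j
        - (frozen k n v j) • v (j - 1) := by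
  simp only [artin]; rw [if_neg h1, if_pos h2]

lemma artin_other {k n i : ℕ} (v : ZMod n → Fin k → ℂ) (j : ZMod n)
    (h1 : ¬ (ZMod.val j) % k = i % k) (h2 : ¬ (ZMod.val j) % k = (i + 1) % k) :
    artin k n i v j = v j := by
  simp only [artin]; rw [if_neg h1, if_neg h2]

lemma laurent_zero (k n : ℕ) (v : ZMod n → Fin k → ℂ) : laurent k n 0 v = 1 := by
  simp [laurent]

lemma laurent_single (k n : ℕ) [NeZero n] (p : ZMod n) (E : ℤ) (v : ZMod n → Fin k → ℂ) :
    laurent k n (fun m => if (m : ℕ) = p.val then E else 0) v = frozen k n v p ^ E := by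
  rw [laurent, Finset.prod_eq_single (⟨p.val, ZMod.val_lt p⟩ : Fin n)]
  · rw [if_pos rfl]
    have h : ((((⟨p.val, ZMod.val_lt p⟩ : Fin n) : ℕ)) : ZMod n) = p := ZMod.natCast_rightInverse p
    rw [h]
  · intro m _ hm
    rw [if_neg (fun h => hm (Fin.ext h)), zpow_zero]
  · intro h; exact absurd (Finset.mem_univ _) h

end QC

/-- Quasi-commutation of distant Artin generators (part of Theorem 6.1):
`σ_i ∘ σ_1` and `σ_1 ∘ σ_i` agree componentwise up to signs and Laurent
monomials in the frozen minors, for `3 ≤ i ≤ k − 1`. -/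
theorem distant_artin_generators_quasi_commute
    (k r n : ℕ) (hk : 4 ≤ k) (hr : 2 ≤ r) (hn : n = r * k)
    (i : ℕ) (hi1 : 3 ≤ i) (hi2 : i ≤ k - 1) (j : ZMod n) :
    ∃ (ε : ℂ) (e : Fin n → ℤ), (ε = 1 ∨ ε = -1) ∧
      ∀ v : ZMod n → Fin k → ℂ, Generic k n v →
        artin k n i (artin k n 1 v) j
          = (ε * laurent k n e v) • artin k n 1 (artin k n i v) j := by
  have hk0 : 0 < k := by omega
  have hik : i < k := by omega
  have him : i % k = i := Nat.mod_eq_of_lt hik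
  have h1k : 1 % k = 1 := Nat.mod_eq_of_lt (by omega)
  have h2k : 2 % k = 2 := Nat.mod_eq_of_lt (by omega)
  have hk1 : (k - 1) % k = k - 1 := Nat.mod_eq_of_lt (by omega)
  haveI : NeZero n := ⟨by subst hn; exact Nat.mul_ne_zero (by omega) (by omega)⟩
  have hd : k ∣ n := hn ▸ Dvd.intro_left r rfl
  have hcast1 : (1 : ZMod n) = ((1 : ℕ) : ZMod n) := Nat.cast_one.symm
  have h11k : (1 + 1) % k = 2 := by norm_num [h2k]
  by_cases hc1 : j.val % k = 1
  · refine ⟨1, 0, Or.inl rfl, fun v hv => ?_⟩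
    rw [QC.laurent_zero, mul_one, one_smul]
    have hres2 : (j + 1).val % k = 2 := by
      rw [hcast1, QC.val_add_cast hd, Nat.add_mod, hc1, h1k]
      norm_num [h2k]
    have hA : ¬ j.val % k = i % k := by rw [hc1, him]; omega
    have hB : ¬ j.val % k = (i + 1) % k := by
      rw [hc1, QC.mod_two_mul (show i + 1 < 2 * k by omega)]; split_ifs <;> omega
    rw [QC.artin_other (artin k n 1 v) j hA hB,
        QC.artin_one v j (by rw [hc1, h1k]),
        QC.artin_one (artin k n i v) j (by rw [hc1, h1k]),
        QC.artin_other v (j + 1) (by rw [hres2, him]; omega)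
          (by rw [hres2, QC.mod_two_mul (show i + 1 < 2 * k by omega)]; split_ifs <;> omega)]
  by_cases hc2 : j.val % k = 2
  · refine ⟨1, fun m => if (m : ℕ) = (j + ((i - 1 : ℕ) : ZMod n)).val then -1 else 0,
      Or.inl rfl, fun v hv => ?_⟩
    set p : ZMod n := j + ((i - 1 : ℕ) : ZMod n) with hp
    rw [QC.laurent_single k n p (-1) v, one_mul, zpow_neg_one]
    have hres : ∀ m : ℕ, (j + (m : ZMod n)).val % k = (2 + m) % k := by
      intro m
      rw [QC.val_add_cast hd, Nat.add_mod, hc2]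
      conv_rhs => rw [Nat.add_mod, h2k]
    have hresm1 : (j - 1).val % k = 1 := by
      rw [QC.val_sub_one hk0 (by omega) hn, Nat.add_mod, hc2, hk1,
        show 2 + (k - 1) = 1 + k by omega, Nat.add_mod_right, h1k]
    have hcast : ((i - 1 : ℕ) : ZMod n) = ((i - 2 : ℕ) : ZMod n) + 1 := by
      rw [show i - 1 = (i - 2) + 1 by omega, Nat.cast_add, Nat.cast_one]
    have hpm1 : p - 1 = j + ((i - 2 : ℕ) : ZMod n) := by rw [hp, hcast]; ring
    have huj : artin k n i v j = v j :=
      QC.artin_other _ _ (by rw [hc2, him]; omega)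
        (by rw [hc2, QC.mod_two_mul (show i + 1 < 2 * k by omega)]; split_ifs <;> omega)
    have hujm : artin k n i v (j - 1) = v (j - 1) :=
      QC.artin_other _ _ (by rw [hresm1, him]; omega)
        (by rw [hresm1, QC.mod_two_mul (show i + 1 < 2 * k by omega)]; split_ifs <;> omega)
    have hut : artin k n i v (j + ((i - 2 : ℕ) : ZMod n)) = v p := by
      rw [QC.artin_one _ _ (by rw [hres, show 2 + (i - 2) = i by omega])]
      congr 1
      rw [hp, hcast]
      ring
    have hup : artin k n i v p =
        (colDet (fun b' : Fin k =>
          if (b' : ℕ) = 0 then v (p - 1) else v (p + ((b' : ℕ) : ZMod n)))) • v p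
          - frozen k n v p • v (p - 1) :=
      QC.artin_two _ _
        (by rw [hp, hres, show 2 + (i - 1) = i + 1 by omega, him,
              QC.mod_two_mul (show i + 1 < 2 * k by omega)]; split_ifs <;> omega)
        (by rw [hp, hres, show 2 + (i - 1) = i + 1 by omega])
    have ht2 : i - 2 < k := by omega
    have ht1 : i - 1 < k := by omega
    have hbother : ∀ b : Fin k, (b : ℕ) ≠ i - 2 → (b : ℕ) ≠ i - 1 →
        artin k n i v (j + ((b : ℕ) : ZMod n)) = v (j + ((b : ℕ) : ZMod n)) := by
      intro b hb2 hb1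
      have hbk : (b : ℕ) < k := b.isLt
      refine QC.artin_other _ _ ?_ ?_
      · rw [hres, him, QC.mod_two_mul (show 2 + (b : ℕ) < 2 * k by omega)]
        split_ifs <;> omega
      · rw [hres, QC.mod_two_mul (show 2 + (b : ℕ) < 2 * k by omega),
          QC.mod_two_mul (show i + 1 < 2 * k by omega)]
        split_ifs <;> omega
    have hA : colDet (fun b : Fin k =>
          if (b : ℕ) = 0 then artin k n i v (j - 1)
          else artin k n i v (j + ((b : ℕ) : ZMod n)))
        = frozen k n v p * colDet (fun b : Fin k =>
          if (b : ℕ) = 0 then v (j - 1) else v (j + ((b : ℕ) : ZMod n))) := by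
      refine QC.colDet_pair _ _ (⟨i - 2, ht2⟩ : Fin k) (⟨i - 1, ht1⟩ : Fin k)
        (by simp only [ne_eq, Fin.mk.injEq]; omega)
        (colDet (fun b' : Fin k =>
          if (b' : ℕ) = 0 then v (p - 1) else v (p + ((b' : ℕ) : ZMod n))))
        (frozen k n v p) ?_ ?_ ?_
      · rw [if_neg (show ¬ (i - 2 = 0) by omega), if_neg (show ¬ (i - 1 = 0) by omega), hut, hp]
      · rw [if_neg (show ¬ (i - 1 = 0) by omega), if_neg (show ¬ (i - 1 = 0) by omega),
          if_neg (show ¬ (i - 2 = 0) by omega), ← hp, ← hpm1]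
        exact hup
      · intro b hb hb'
        have hb2 : (b : ℕ) ≠ i - 2 := fun h => hb (Fin.ext h)
        have hb1 : (b : ℕ) ≠ i - 1 := fun h => hb' (Fin.ext h)
        by_cases hb0 : (b : ℕ) = 0
        · rw [if_pos hb0, if_pos hb0]; exact hujm
        · rw [if_neg hb0, if_neg hb0]; exact hbother b hb2 hb1
    have hF : frozen k n (artin k n i v) j = frozen k n v p * frozen k n v j := by
      show colDet (fun b : Fin k => artin k n i v (j + ((b : ℕ) : ZMod n)))
          = frozen k n v p * colDet (fun b : Fin k => v (j + ((b : ℕ) : ZMod n)))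
      refine QC.colDet_pair _ _ (⟨i - 2, ht2⟩ : Fin k) (⟨i - 1, ht1⟩ : Fin k)
        (by simp only [ne_eq, Fin.mk.injEq]; omega)
        (colDet (fun b' : Fin k =>
          if (b' : ℕ) = 0 then v (p - 1) else v (p + ((b' : ℕ) : ZMod n))))
        (frozen k n v p) ?_ ?_ ?_
      · show artin k n i v (j + (((i - 2 : ℕ)) : ZMod n)) = v (j + (((i - 1 : ℕ)) : ZMod n))
        rw [hut, hp]
      · show artin k n i v (j + (((i - 1 : ℕ)) : ZMod n)) = _
        rw [← hp, ← hpm1]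
        exact hup
      · intro b hb hb'
        exact hbother b (fun h => hb (Fin.ext h)) (fun h => hb' (Fin.ext h))
    rw [QC.artin_other (artin k n 1 v) j
          (by rw [hc2, him]; omega)
          (by rw [hc2, QC.mod_two_mul (show i + 1 < 2 * k by omega)]; split_ifs <;> omega),
        QC.artin_two v j (by rw [hc2, h1k]; omega) (by rw [hc2, h11k]),
        QC.artin_two (artin k n i v) j (by rw [hc2, h1k]; omega) (by rw [hc2, h11k]),
        hA, hF, huj, hujm, smul_sub, smul_smul, smul_smul,
        inv_mul_cancel_left₀ (hv p), inv_mul_cancel_left₀ (hv p)]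
  by_cases hci : j.val % k = i
  · refine ⟨1, 0, Or.inl rfl, fun v hv => ?_⟩
    rw [QC.laurent_zero, mul_one, one_smul]
    have hres2 : (j + 1).val % k = (i + 1) % k := by
      rw [hcast1, QC.val_add_cast hd, Nat.add_mod, hci]
      conv_rhs => rw [Nat.add_mod, him]
    rw [QC.artin_one (artin k n 1 v) j (by rw [hci, him]),
        QC.artin_other v (j + 1)
          (by rw [hres2, h1k, QC.mod_two_mul (show i + 1 < 2 * k by omega)]; split_ifs <;> omega)
          (by rw [hres2, h11k, QC.mod_two_mul (show i + 1 < 2 * k by omega)]; split_ifs <;> omega),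
        QC.artin_other (artin k n i v) j
          (by rw [hci, h1k]; omega)
          (by rw [hci, h11k]; omega),
        QC.artin_one v j (by rw [hci, him])]
  by_cases hci1 : j.val % k = (i + 1) % k
  · refine ⟨1, fun m => if (m : ℕ) = (j + ((k - i + 1 : ℕ) : ZMod n)).val then 1 else 0,
      Or.inl rfl, fun v hv => ?_⟩
    set q : ZMod n := j + ((k - i + 1 : ℕ) : ZMod n) with hq
    rw [QC.laurent_single k n q 1 v, one_mul, zpow_one]
    have hres : ∀ m : ℕ, (j + (m : ZMod n)).val % k = (i + 1 + m) % k := by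
      intro m
      rw [QC.val_add_cast hd, Nat.add_mod, hci1, ← Nat.add_mod]
    have hresm1 : (j - 1).val % k = i % k := by
      rw [QC.val_sub_one hk0 (by omega) hn, Nat.add_mod, hci1, ← Nat.add_mod,
        show i + 1 + (k - 1) = i + k by omega, Nat.add_mod_right]
    have hcast : ((k - i + 1 : ℕ) : ZMod n) = ((k - i : ℕ) : ZMod n) + 1 := by
      rw [Nat.cast_add, Nat.cast_one]
    have hqm1 : q - 1 = j + ((k - i : ℕ) : ZMod n) := by rw [hq, hcast]; ring
    have hwj : artin k n 1 v j = v j :=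
      QC.artin_other _ _
        (by rw [hci1, h1k, QC.mod_two_mul (show i + 1 < 2 * k by omega)]; split_ifs <;> omega)
        (by rw [hci1, h11k, QC.mod_two_mul (show i + 1 < 2 * k by omega)]; split_ifs <;> omega)
    have hwjm : artin k n 1 v (j - 1) = v (j - 1) :=
      QC.artin_other _ _ (by rw [hresm1, him, h1k]; omega) (by rw [hresm1, him, h11k]; omega)
    have hwt : artin k n 1 v (j + ((k - i : ℕ) : ZMod n)) = v q := by
      rw [QC.artin_one _ _
        (by rw [hres, show i + 1 + (k - i) = 1 + k by omega, Nat.add_mod_right])]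
      congr 1
      rw [hq, hcast]
      ring
    have hwq : artin k n 1 v q =
        (colDet (fun b' : Fin k =>
          if (b' : ℕ) = 0 then v (q - 1) else v (q + ((b' : ℕ) : ZMod n)))) • v q
          - frozen k n v q • v (q - 1) :=
      QC.artin_two _ _
        (by rw [hq, hres, show i + 1 + (k - i + 1) = 2 + k by omega, Nat.add_mod_right,
              h2k, h1k]; omega)
        (by rw [hq, hres, show i + 1 + (k - i + 1) = 2 + k by omega, Nat.add_mod_right, h2k])
    have ht2 : k - i < k := by omega
    have ht1 : k - i + 1 < k := by omega
    have hbother : ∀ b : Fin k, (b : ℕ) ≠ k - i → (b : ℕ) ≠ k - i + 1 →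
        artin k n 1 v (j + ((b : ℕ) : ZMod n)) = v (j + ((b : ℕ) : ZMod n)) := by
      intro b hb2 hb1
      have hbk : (b : ℕ) < k := b.isLt
      refine QC.artin_other _ _ ?_ ?_
      · rw [hres, h1k, QC.mod_two_mul (show i + 1 + (b : ℕ) < 2 * k by omega)]
        split_ifs <;> omega
      · rw [hres, h11k, QC.mod_two_mul (show i + 1 + (b : ℕ) < 2 * k by omega)]
        split_ifs <;> omega
    have hA : colDet (fun b : Fin k =>
          if (b : ℕ) = 0 then artin k n 1 v (j - 1)
          else artin k n 1 v (j + ((b : ℕ) : ZMod n)))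
        = frozen k n v q * colDet (fun b : Fin k =>
          if (b : ℕ) = 0 then v (j - 1) else v (j + ((b : ℕ) : ZMod n))) := by
      refine QC.colDet_pair _ _ (⟨k - i, ht2⟩ : Fin k) (⟨k - i + 1, ht1⟩ : Fin k)
        (by simp only [ne_eq, Fin.mk.injEq]; omega)
        (colDet (fun b' : Fin k =>
          if (b' : ℕ) = 0 then v (q - 1) else v (q + ((b' : ℕ) : ZMod n))))
        (frozen k n v q) ?_ ?_ ?_
      · rw [if_neg (show ¬ (k - i = 0) by omega), if_neg (show ¬ (k - i + 1 = 0) by omega),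
          hwt, hq]
      · rw [if_neg (show ¬ (k - i + 1 = 0) by omega), if_neg (show ¬ (k - i + 1 = 0) by omega),
          if_neg (show ¬ (k - i = 0) by omega), ← hq, ← hqm1]
        exact hwq
      · intro b hb hb'
        have hb2 : (b : ℕ) ≠ k - i := fun h => hb (Fin.ext h)
        have hb1 : (b : ℕ) ≠ k - i + 1 := fun h => hb' (Fin.ext h)
        by_cases hb0 : (b : ℕ) = 0
        · rw [if_pos hb0, if_pos hb0]; exact hwjm
        · rw [if_neg hb0, if_neg hb0]; exact hbother b hb2 hb1
    have hF : frozen k n (artin k n 1 v) j = frozen k n v q * frozen k n v j := by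
      show colDet (fun b : Fin k => artin k n 1 v (j + ((b : ℕ) : ZMod n)))
          = frozen k n v q * colDet (fun b : Fin k => v (j + ((b : ℕ) : ZMod n)))
      refine QC.colDet_pair _ _ (⟨k - i, ht2⟩ : Fin k) (⟨k - i + 1, ht1⟩ : Fin k)
        (by simp only [ne_eq, Fin.mk.injEq]; omega)
        (colDet (fun b' : Fin k =>
          if (b' : ℕ) = 0 then v (q - 1) else v (q + ((b' : ℕ) : ZMod n))))
        (frozen k n v q) ?_ ?_ ?_
      · show artin k n 1 v (j + (((k - i : ℕ)) : ZMod n)) = v (j + (((k - i + 1 : ℕ)) : ZMod n))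
        rw [hwt, hq]
      · show artin k n 1 v (j + (((k - i + 1 : ℕ)) : ZMod n)) = _
        rw [← hq, ← hqm1]
        exact hwq
      · intro b hb hb'
        exact hbother b (fun h => hb (Fin.ext h)) (fun h => hb' (Fin.ext h))
    rw [QC.artin_two (artin k n 1 v) j
          (by rw [hci1, him, QC.mod_two_mul (show i + 1 < 2 * k by omega)]; split_ifs <;> omega)
          hci1,
        hA, hF, hwj, hwjm,
        QC.artin_other (artin k n i v) j
          (by rw [hci1, h1k, QC.mod_two_mul (show i + 1 < 2 * k by omega)]; split_ifs <;> omega)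
          (by rw [hci1, h11k, QC.mod_two_mul (show i + 1 < 2 * k by omega)]; split_ifs <;> omega),
        QC.artin_two v j
          (by rw [hci1, him, QC.mod_two_mul (show i + 1 < 2 * k by omega)]; split_ifs <;> omega)
          hci1,
        smul_sub, smul_smul, smul_smul]
  · refine ⟨1, 0, Or.inl rfl, fun v hv => ?_⟩
    rw [QC.laurent_zero, mul_one, one_smul]
    rw [QC.artin_other (artin k n 1 v) j (by rw [him]; exact hci) hci1,
        QC.artin_other v j (by rw [h1k]; exact hc1) (by rw [h11k]; exact hc2),
        QC.artin_other (artin k n i v) j (by rw [h1k]; exact hc1) (by rw [h11k]; exact hc2),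
        QC.artin_other v j (by rw [him]; exact hci) hci1]

end
end

section
/- Quasi-inverse of the first Artin generator (part of Theorem 6.1): Let k ≥ 2, r ≥ 2, n = rk. Define the map τ (denoted σ_1^{-1} in the paper) on configurations by: (τ v)_j = v_{j−1} if j ≡ 2 (mod k); (τ v)_j = det(v_{j+1} | v_{j−k+1} | v_{j−k+2} | ⋯ | v_{j−1})·v_j − det(v_j | v_{j−k+1} | ⋯ | v_{j−1})·v_{j+1} if j ≡ 1 (mod k); and (τ v)_j = v_j otherwise. Then for every index j ∈ ZMod n there exist a sign ε_j ∈ {+1, −1} and a Laurent monomial M_j in the frozen minors (both independent of v) such that for every generic configuration v, the j-th vector of τ(σ_1(v)) equals ε_j · M_j(v) · v_j. In other words, τ ∘ σ_1 is the identity componentwise up to signs and Laurent monomials in the frozen minors. -/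
open scoped BigOperators

noncomputable section

/-- The map `τ` (denoted `σ_1⁻¹` in the paper). -/
def tauMap (k n : ℕ) (v : ZMod n → Fin k → ℂ) : ZMod n → Fin k → ℂ :=
  fun j =>
    if (ZMod.val j) % k = 2 % k then v (j - 1)
    else if (ZMod.val j) % k = 1 % k then
      (colDet (fun b : Fin k =>
          if (b : ℕ) = 0 then v (j + 1)
          else v (j - (k : ZMod n) + ((b : ℕ) : ZMod n)))) • v j
        - (colDet (fun b : Fin k =>
          if (b : ℕ) = 0 then v j
          else v (j - (k : ZMod n) + ((b : ℕ) : ZMod n)))) • v (j + 1)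
    else v j


lemma colDet_alt {k : ℕ} (c : Fin k → Fin k → ℂ) :
    colDet c = Matrix.detRowAlternating c := by
  unfold colDet
  rw [show (Matrix.of fun a b => c b a) = (Matrix.of c).transpose from rfl,
    Matrix.det_transpose]
  rfl

lemma units_neg_one_pow_smul (m : ℕ) (x : ℂ) : ((-1:ℤˣ)^m) • x = (-1:ℂ)^m * x := by
  rw [Units.smul_def]
  push_cast
  rw [zsmul_eq_mul]
  push_cast
  ring

lemma h01F {k' : ℕ} : (0 : Fin (k'+2)) ≠ (1 : Fin (k'+2)) := by
  simp [Fin.ext_iff]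

lemma upd_eval {k' : ℕ} (base : Fin (k'+2) → Fin (k'+2) → ℂ) (x y : Fin (k'+2) → ℂ)
    (t : Fin (k'+2)) :
    (Function.update (Function.update base 1 y) 0 x) t
      = if (t:ℕ) = 0 then x else if (t:ℕ) = 1 then y else base t := by
  by_cases h0 : t = 0
  · subst h0; simp [Function.update_apply, h01F]
  · have h0' : (t:ℕ) ≠ 0 := fun h => h0 (Fin.ext h)
    rw [if_neg h0']
    by_cases h1 : t = 1
    · subst h1; simp [Function.update_apply, Fin.val_one]
    · have h1' : (t:ℕ) ≠ 1 := fun h => h1 (Fin.ext (by rw [h, Fin.val_one]))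
      rw [if_neg h1', Function.update_apply, if_neg h0, Function.update_apply, if_neg h1]

lemma swap01_val {k' : ℕ} (x : Fin (k'+2)) :
    ((Equiv.swap 0 1 x : Fin (k'+2)) : ℕ)
      = if (x:ℕ) = 0 then 1 else if (x:ℕ) = 1 then 0 else (x:ℕ) := by
  by_cases h0 : x = 0
  · subst h0; rw [Equiv.swap_apply_left]; simp [Fin.val_one]
  · have h0' : (x:ℕ) ≠ 0 := fun h => h0 (Fin.ext h)
    rw [if_neg h0']
    by_cases h1 : x = 1
    · subst h1; rw [Equiv.swap_apply_right]; simp [Fin.val_one]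
    · have h1' : (x:ℕ) ≠ 1 := fun h => h1 (Fin.ext (by rw [h, Fin.val_one]))
      rw [if_neg h1', Equiv.swap_apply_of_ne_of_ne h0 h1]

lemma rot_val {k' : ℕ} (s : Fin (k'+2)) :
    ((finRotate (k'+2) s : Fin (k'+2)) : ℕ) = ((s:ℕ) + 1) % (k'+2) := by
  rw [finRotate_succ_apply, Fin.val_add, Fin.val_one]

lemma rot2_val {k' : ℕ} (s : Fin (k'+2)) :
    ((finRotate (k'+2) (finRotate (k'+2) s) : Fin (k'+2)) : ℕ)
      = ((s:ℕ) + 2) % (k'+2) := by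
  rw [rot_val, rot_val, Nat.mod_add_mod]

lemma det_cycle {k' : ℕ} (S : Fin (k'+2) → Fin (k'+2) → ℂ) :
    Matrix.detRowAlternating (S ∘ (Equiv.swap 0 1) ∘ (finRotate (k'+2)))
      = (-1:ℂ)^(k'+2) * Matrix.detRowAlternating S := by
  rw [show S ∘ (Equiv.swap 0 1) ∘ (finRotate (k'+2))
      = (S ∘ (Equiv.swap 0 1 : Equiv.Perm (Fin (k'+2)))) ∘ (finRotate (k'+2)) from rfl]
  rw [(Matrix.detRowAlternating).map_perm (S ∘ (Equiv.swap 0 1 : Equiv.Perm (Fin (k'+2))))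
    (finRotate (k'+2))]
  have h2 : Matrix.detRowAlternating (S ∘ ⇑(Equiv.swap (0 : Fin (k'+2)) 1))
      = - Matrix.detRowAlternating S := (Matrix.detRowAlternating).map_swap S h01F
  rw [h2, sign_finRotate, show k'+2-1 = k'+1 from rfl, units_neg_one_pow_smul (k'+1) (-(Matrix.detRowAlternating S))]
  ring

lemma det_rot2 {k' : ℕ} (S : Fin (k'+2) → Fin (k'+2) → ℂ) :
    Matrix.detRowAlternating (S ∘ (finRotate (k'+2)) ∘ (finRotate (k'+2)))
      = Matrix.detRowAlternating S := by
  rw [show S ∘ (finRotate (k'+2)) ∘ (finRotate (k'+2))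
      = (S ∘ (finRotate (k'+2))) ∘ (finRotate (k'+2)) from rfl]
  rw [(Matrix.detRowAlternating).map_perm (S ∘ (finRotate (k'+2))) (finRotate (k'+2)),
    (Matrix.detRowAlternating).map_perm S (finRotate (k'+2)), smul_smul,
    Int.units_mul_self, one_smul]

lemma det_anti {k' : ℕ} (base : Fin (k'+2) → Fin (k'+2) → ℂ) (x y : Fin (k'+2) → ℂ) :
    Matrix.detRowAlternating (Function.update (Function.update base 1 x) 0 y)
      = - Matrix.detRowAlternating (Function.update (Function.update base 1 y) 0 x) := by
  have hswap : Function.update (Function.update base 1 x) 0 y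
      = (Function.update (Function.update base 1 y) 0 x) ∘ Equiv.swap 0 1 := by
    funext t
    rw [Function.comp_apply, upd_eval]
    by_cases h0 : (t:ℕ) = 0
    · have ht : t = 0 := Fin.ext h0
      subst ht
      rw [Equiv.swap_apply_left]
      simp [Fin.val_one, upd_eval]
    · by_cases h1 : (t:ℕ) = 1
      · have ht : t = 1 := Fin.ext (by rw [h1, Fin.val_one])
        subst ht
        rw [Equiv.swap_apply_right]
        simp [Fin.val_one, upd_eval]
      · have ht0 : t ≠ 0 := fun h => h0 (by rw [h]; rfl)
        have ht1 : t ≠ 1 := fun h => h1 (by rw [h, Fin.val_one])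
        rw [Equiv.swap_apply_of_ne_of_ne ht0 ht1, upd_eval, if_neg h0, if_neg h1,
          if_neg h0, if_neg h1]
  rw [hswap]
  exact (Matrix.detRowAlternating (n := Fin (k'+2)) (R := ℂ)).map_swap
    (Function.update (Function.update base 1 y) 0 x) h01F

-- pointwise evaluation of cycled update-tuples
lemma cyc0 {k' : ℕ} (base : Fin (k'+2) → Fin (k'+2) → ℂ) (x y : Fin (k'+2) → ℂ)
    (s : Fin (k'+2)) (h0 : (s:ℕ) = 0) :
    ((Function.update (Function.update base 1 y) 0 x) ∘ (Equiv.swap 0 1)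
      ∘ (finRotate (k'+2))) s = x := by
  have hm : ((s:ℕ)+1) % (k'+2) = 1 := by rw [h0]; exact Nat.mod_eq_of_lt (by omega)
  rw [Function.comp_apply, Function.comp_apply, upd_eval, swap01_val, rot_val, hm]
  norm_num

lemma cyclast {k' : ℕ} (base : Fin (k'+2) → Fin (k'+2) → ℂ) (x y : Fin (k'+2) → ℂ)
    (s : Fin (k'+2)) (h : (s:ℕ) = k'+1) :
    ((Function.update (Function.update base 1 y) 0 x) ∘ (Equiv.swap 0 1)
      ∘ (finRotate (k'+2))) s = y := by
  have hm : ((s:ℕ)+1) % (k'+2) = 0 := by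
    rw [h, show (k'+1)+1 = k'+2 from rfl]; exact Nat.mod_self _
  rw [Function.comp_apply, Function.comp_apply, upd_eval, swap01_val, rot_val, hm]
  norm_num

lemma cycmid {k' : ℕ} (base : Fin (k'+2) → Fin (k'+2) → ℂ) (x y : Fin (k'+2) → ℂ)
    (s : Fin (k'+2)) (h0 : (s:ℕ) ≠ 0) (hlt : (s:ℕ)+1 < k'+2) :
    ((Function.update (Function.update base 1 y) 0 x) ∘ (Equiv.swap 0 1)
      ∘ (finRotate (k'+2))) s = base ⟨(s:ℕ)+1, hlt⟩ := by
  have hm : ((s:ℕ)+1) % (k'+2) = (s:ℕ)+1 := Nat.mod_eq_of_lt hlt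
  have hsw : ((Equiv.swap 0 1 (finRotate (k'+2) s) : Fin (k'+2)):ℕ) = (s:ℕ)+1 := by
    rw [swap01_val, rot_val, hm, if_neg (by omega), if_neg (by omega)]
  have harg : (Equiv.swap 0 1 (finRotate (k'+2) s) : Fin (k'+2)) = ⟨(s:ℕ)+1, hlt⟩ :=
    Fin.ext (by rw [hsw])
  rw [Function.comp_apply, Function.comp_apply, harg, upd_eval,
    if_neg (show ¬((⟨(s:ℕ)+1, hlt⟩ : Fin (k'+2)):ℕ) = 0 from by simp),
    if_neg (show ¬((⟨(s:ℕ)+1, hlt⟩ : Fin (k'+2)):ℕ) = 1 from by show ¬((s:ℕ)+1 = 1); omega)]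

lemma rot2k {k' : ℕ} (base : Fin (k'+2) → Fin (k'+2) → ℂ) (x y : Fin (k'+2) → ℂ)
    (s : Fin (k'+2)) (h : (s:ℕ) = k') :
    ((Function.update (Function.update base 1 y) 0 x) ∘ (finRotate (k'+2))
      ∘ (finRotate (k'+2))) s = x := by
  have hm : ((s:ℕ)+2) % (k'+2) = 0 := by rw [h]; exact Nat.mod_self _
  have hv : ((finRotate (k'+2) (finRotate (k'+2) s) : Fin (k'+2)):ℕ) = 0 := by
    rw [rot2_val, hm]
  rw [Function.comp_apply, Function.comp_apply, upd_eval, hv]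
  norm_num

lemma rot2last {k' : ℕ} (base : Fin (k'+2) → Fin (k'+2) → ℂ) (x y : Fin (k'+2) → ℂ)
    (s : Fin (k'+2)) (h : (s:ℕ) = k'+1) :
    ((Function.update (Function.update base 1 y) 0 x) ∘ (finRotate (k'+2))
      ∘ (finRotate (k'+2))) s = y := by
  have hm : ((s:ℕ)+2) % (k'+2) = 1 := by
    rw [h, show (k'+1)+2 = (k'+2)+1 from rfl, Nat.add_mod_left]
    exact Nat.mod_eq_of_lt (by omega)
  have hv : ((finRotate (k'+2) (finRotate (k'+2) s) : Fin (k'+2)):ℕ) = 1 := by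
    rw [rot2_val, hm]
  rw [Function.comp_apply, Function.comp_apply, upd_eval, hv]
  norm_num

lemma rot2mid {k' : ℕ} (base : Fin (k'+2) → Fin (k'+2) → ℂ) (x y : Fin (k'+2) → ℂ)
    (s : Fin (k'+2)) (hlt : (s:ℕ)+2 < k'+2) :
    ((Function.update (Function.update base 1 y) 0 x) ∘ (finRotate (k'+2))
      ∘ (finRotate (k'+2))) s = base ⟨(s:ℕ)+2, hlt⟩ := by
  have hm : ((s:ℕ)+2) % (k'+2) = (s:ℕ)+2 := Nat.mod_eq_of_lt hlt
  have harg : (finRotate (k'+2) (finRotate (k'+2) s) : Fin (k'+2)) = ⟨(s:ℕ)+2, hlt⟩ :=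
    Fin.ext (by rw [rot2_val, hm])
  rw [Function.comp_apply, Function.comp_apply, harg, upd_eval,
    if_neg (show ¬((⟨(s:ℕ)+2, hlt⟩ : Fin (k'+2)):ℕ) = 0 from by simp),
    if_neg (show ¬((⟨(s:ℕ)+2, hlt⟩ : Fin (k'+2)):ℕ) = 1 from by simp)]

-- ZMod index helpers
lemma zval {k n : ℕ} (hn0 : n ≠ 0) (hkn : k ∣ n) (x : ZMod n) (t : ℕ) :
    (x + (t : ZMod n)).val % k = (x.val + t) % k := by
  haveI : NeZero n := ⟨hn0⟩
  rw [ZMod.val_add, ZMod.val_natCast, Nat.mod_mod_of_dvd _ hkn, Nat.add_mod,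
    Nat.mod_mod_of_dvd t hkn, ← Nat.add_mod]

lemma zsub {n c : ℕ} (hc : c ≤ n) (x : ZMod n) :
    x - (c : ZMod n) = x + ((n - c : ℕ) : ZMod n) := by
  have h : ((n - c : ℕ) : ZMod n) = (n : ZMod n) - (c : ZMod n) := by
    rw [Nat.cast_sub hc]
  rw [h, ZMod.natCast_self]
  ring

lemma zvalk {k n r : ℕ} (hk : 2 ≤ k) (hr : 2 ≤ r) (hn : n = r * k) (x : ZMod n) (t : ℕ) :
    (x - (k : ZMod n) + (t : ZMod n)).val % k = (x.val + t) % k := by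
  have hn0 : n ≠ 0 := by rw [hn]; positivity
  have hkn : k ∣ n := hn ▸ dvd_mul_left k r
  have hkn' : k ≤ n := Nat.le_of_dvd (Nat.pos_of_ne_zero hn0) hkn
  rw [zsub hkn', add_assoc, ← Nat.cast_add, zval hn0 hkn]
  have h2 : (r-1) * k + k = n := by
    rw [hn, Nat.sub_one_mul]
    exact Nat.sub_add_cancel (by rw [hn] at hkn'; exact hkn')
  have h3 : x.val + (n - k + t) = (x.val + t) + (r-1) * k := by omega
  rw [h3, Nat.add_mul_mod_self_right]

lemma zval1 {k n r : ℕ} (hk : 2 ≤ k) (hr : 2 ≤ r) (hn : n = r * k) (x : ZMod n) :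
    (x - 1).val % k = (x.val + (k-1)) % k := by
  have hn0 : n ≠ 0 := by rw [hn]; positivity
  have hkn : k ∣ n := hn ▸ dvd_mul_left k r
  have hkn' : k ≤ n := Nat.le_of_dvd (Nat.pos_of_ne_zero hn0) hkn
  rw [show (1 : ZMod n) = ((1:ℕ) : ZMod n) from (Nat.cast_one).symm,
    zsub (by omega : 1 ≤ n), zval hn0 hkn]
  have h2 : (r-1) * k + k = n := by
    rw [hn, Nat.sub_one_mul]
    exact Nat.sub_add_cancel (by rw [hn] at hkn'; exact hkn')
  have h3 : x.val + (n - 1) = (x.val + (k-1)) + (r-1) * k := by omega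
  rw [h3, Nat.add_mul_mod_self_right]

lemma laurent_eval {k n : ℕ} (hn0 : n ≠ 0) (v : ZMod n → Fin k → ℂ) (hv : Generic k n v)
    (c₁ c₂ c₃ : ZMod n) :
    laurent k n (fun m => (if ((m:ℕ):ZMod n) = c₁ then 1 else 0)
      + ((if ((m:ℕ):ZMod n) = c₂ then 1 else 0)
        + (if ((m:ℕ):ZMod n) = c₃ then 1 else 0))) v
      = frozen k n v c₁ * (frozen k n v c₂ * frozen k n v c₃) := by
  haveI : NeZero n := ⟨hn0⟩
  have key : ∀ c : ZMod n,
      (∏ m : Fin n, frozen k n v ((m:ℕ):ZMod n) ^ (if ((m:ℕ):ZMod n) = c then (1:ℤ) else 0))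
        = frozen k n v c := by
    intro c
    rw [Finset.prod_eq_single (⟨c.val, ZMod.val_lt c⟩ : Fin n)]
    · have hcc : ((((⟨c.val, ZMod.val_lt c⟩ : Fin n) : ℕ)) : ZMod n) = c := by
        simp [ZMod.natCast_val, ZMod.cast_id]
      rw [hcc, if_pos rfl, zpow_one]
    · intro m _ hm
      rw [if_neg, zpow_zero]
      intro hc
      apply hm
      apply Fin.ext
      have hmv : (((m:ℕ) : ZMod n)).val = (m:ℕ) := by
        rw [ZMod.val_natCast, Nat.mod_eq_of_lt m.isLt]
      show (m:ℕ) = c.val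
      rw [← hmv, hc]
    · intro h; exact absurd (Finset.mem_univ _) h
  unfold laurent
  have expand : ∀ m : Fin n, m ∈ Finset.univ →
      frozen k n v ((m:ℕ):ZMod n) ^ ((if ((m:ℕ):ZMod n) = c₁ then (1:ℤ) else 0)
        + ((if ((m:ℕ):ZMod n) = c₂ then (1:ℤ) else 0)
          + (if ((m:ℕ):ZMod n) = c₃ then (1:ℤ) else 0)))
      = frozen k n v ((m:ℕ):ZMod n) ^ (if ((m:ℕ):ZMod n) = c₁ then (1:ℤ) else 0)
        * (frozen k n v ((m:ℕ):ZMod n) ^ (if ((m:ℕ):ZMod n) = c₂ then (1:ℤ) else 0)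
          * frozen k n v ((m:ℕ):ZMod n) ^ (if ((m:ℕ):ZMod n) = c₃ then (1:ℤ) else 0)) := by
    intro m _
    rw [zpow_add₀ (hv _), zpow_add₀ (hv _)]
  rw [Finset.prod_congr rfl expand, Finset.prod_mul_distrib, Finset.prod_mul_distrib,
    key, key, key]

lemma pluecker {k' : ℕ} (base : Fin (k'+2) → Fin (k'+2) → ℂ) (c d : Fin (k'+2) → ℂ)
    (F : (Fin (k'+2) → ℂ) → (Fin (k'+2) → ℂ) → ℂ)
    (hF : ∀ x y, F x y =
      Matrix.detRowAlternating (Function.update (Function.update base 1 y) 0 x))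
    (u : Fin (k'+2) → Fin (k'+2) → ℂ)
    (hu : ∀ s : Fin (k'+2), u s = if h : (s:ℕ)+1 < k'+2 then base ⟨(s:ℕ)+1, h⟩ else c)
    (hdet : Matrix.det (Matrix.of u) ≠ 0) :
    F (base 0) (base 1) * F c d - F (base 0) c * F (base 1) d
      + F (base 0) d * F (base 1) c = 0 := by
  set D := (Matrix.detRowAlternating : (Fin (k'+2) → ℂ) [⋀^Fin (k'+2)]→ₗ[ℂ] ℂ) with hD
  set a := base 0 with hb0
  set b := base 1 with hb1
  have h01 : (0 : Fin (k'+2)) ≠ (1 : Fin (k'+2)) := by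
    simp [Fin.ext_iff]
  have hanti : ∀ x y, F y x = - F x y := by
    intro x y
    have hswap : Function.update (Function.update base 1 x) 0 y
        = (Function.update (Function.update base 1 y) 0 x) ∘ Equiv.swap 0 1 := by
      funext t
      rcases eq_or_ne t 0 with rfl | h0
      · simp [Equiv.swap_apply_left, Function.update_apply, h01]
      · rcases eq_or_ne t 1 with rfl | h1
        · simp [Equiv.swap_apply_right, Function.update_apply, h01.symm]
        · rw [Function.comp_apply, Equiv.swap_apply_of_ne_of_ne h0 h1]
          simp [Function.update_apply, h0, h1]
    rw [hF, hF, hswap, D.map_swap _ h01]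
  have hgen : ∀ s : Fin (k'+2), F (u s) b * F c d - F (u s) c * F b d
      + F (u s) d * F b c = 0 := by
    intro s
    by_cases h : (s:ℕ)+1 < k'+2
    · have husb : u s = base ⟨(s:ℕ)+1, h⟩ := by rw [hu]; exact dif_pos h
      rcases Nat.lt_or_ge (1:ℕ) ((s:ℕ)+1) with hgt | hle
      · have hm0 : (⟨(s:ℕ)+1, h⟩ : Fin (k'+2)) ≠ 0 := Fin.ne_of_val_ne (by simp)
        have hm1 : (⟨(s:ℕ)+1, h⟩ : Fin (k'+2)) ≠ 1 :=
          Fin.ne_of_val_ne (by simp only [Fin.val_one]; omega)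
        have hzero : ∀ y, F (u s) y = 0 := by
          intro y
          rw [hF, husb]
          refine D.map_eq_zero_of_eq _ (i := 0) (j := ⟨(s:ℕ)+1, h⟩) ?_ hm0.symm
          simp [Function.update_apply, hm0, hm1]
        simp [hzero]
      · have hs1 : (⟨(s:ℕ)+1, h⟩ : Fin (k'+2)) = 1 :=
          Fin.ext (by simp only [Fin.val_one]; omega)
        have husb' : u s = b := by rw [husb, hs1, hb1]
        have hbb : F b b = 0 := by
          rw [hF]
          refine D.map_eq_zero_of_eq _ (i := 0) (j := 1) ?_ h01
          simp [Function.update_apply, h01.symm]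
        rw [husb', hbb]; ring
    · have husc : u s = c := by rw [hu]; exact dif_neg h
      have hcc : F c c = 0 := by
        rw [hF]
        refine D.map_eq_zero_of_eq _ (i := 0) (j := 1) ?_ h01
        simp [Function.update_apply, h01.symm]
      have hcb : F c b = - F b c := hanti b c
      rw [husc, hcc, hcb]; ring
  have hdetM : IsUnit (Matrix.of u).det := hdet.isUnit
  set cv := Matrix.vecMul a (Matrix.of u)⁻¹ with hcv0
  have hcv : Matrix.vecMul cv (Matrix.of u) = a := by
    rw [hcv0, Matrix.vecMul_vecMul, Matrix.nonsing_inv_mul _ hdetM, Matrix.vecMul_one]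
  have ha : a = ∑ s : Fin (k'+2), cv s • u s := by
    funext i
    rw [← hcv]
    simp [Matrix.vecMul, dotProduct, Finset.sum_apply]
  have hDm : ∀ (m : Fin (k'+2) → Fin (k'+2) → ℂ), D m = D.toMultilinearMap m := fun _ => rfl
  have hlin : ∀ y, F a y = ∑ s : Fin (k'+2), cv s * F (u s) y := by
    intro y
    rw [hF, ha, hDm, MultilinearMap.map_update_sum]
    refine Finset.sum_congr rfl fun s _ => ?_
    rw [← hDm, D.map_update_smul, hF, smul_eq_mul]
  rw [hlin b, hlin c, hlin d, Finset.sum_mul, Finset.sum_mul, Finset.sum_mul,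
    ← Finset.sum_sub_distrib, ← Finset.sum_add_distrib]
  exact Finset.sum_eq_zero fun s _ => by linear_combination cv s * hgen s

set_option maxHeartbeats 3200000 in
/-- Quasi-inverse of the first Artin generator (part of Theorem 6.1):
`τ ∘ σ_1` is the identity componentwise up to signs and Laurent monomials
in the frozen minors. -/
theorem tau_is_quasi_inverse_of_sigma_one
    (k r n : ℕ) (hk : 2 ≤ k) (hr : 2 ≤ r) (hn : n = r * k) (j : ZMod n) :
    ∃ (ε : ℂ) (e : Fin n → ℤ), (ε = 1 ∨ ε = -1) ∧
      ∀ v : ZMod n → Fin k → ℂ, Generic k n v →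
        tauMap k n (artin k n 1 v) j = (ε * laurent k n e v) • v j := by
  obtain ⟨k', rfl⟩ : ∃ k', k = k' + 2 := ⟨k - 2, by omega⟩
  have hn0 : n ≠ 0 := by rw [hn]; positivity
  haveI : NeZero n := ⟨hn0⟩
  have hkn : (k'+2) ∣ n := hn ▸ dvd_mul_left (k'+2) r
  have h1K : 1 % (k'+2) = 1 := Nat.mod_eq_of_lt (by omega)
  have h21 : ¬((2:ℕ) % (k'+2) = 1 % (k'+2)) := by
    rw [h1K]
    rcases Nat.eq_zero_or_pos k' with h | h
    · subst h; decide
    · rw [Nat.mod_eq_of_lt (by omega)]; omega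
  by_cases hA : (ZMod.val j) % (k'+2) = 2 % (k'+2)
  · -- easy case : j ≡ 2 (mod k)
    refine ⟨1, 0, Or.inl rfl, fun v hv => ?_⟩
    have hl : laurent (k'+2) n 0 v = 1 := by
      unfold laurent; simp
    rw [hl, mul_one, one_smul]
    have hj1 : (j - 1).val % (k'+2) = 1 % (k'+2) := by
      rw [zval1 (by omega) hr hn, Nat.add_mod, hA, h1K]
      rcases Nat.eq_zero_or_pos k' with h | h
      · subst h; decide
      · rw [Nat.mod_eq_of_lt (show 2 < k'+2 by omega),
          Nat.mod_eq_of_lt (show k'+2-1 < k'+2 by omega),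
          show 2 + (k'+2-1) = (k'+2) + 1 from by omega, Nat.add_mod_left, h1K]
    simp only [tauMap]
    rw [if_pos hA]
    simp only [artin]
    rw [if_pos hj1]
    congr 1
    ring
  · by_cases hB : (ZMod.val j) % (k'+2) = 1 % (k'+2)
    · -- main case : j ≡ 1 (mod k)
      refine ⟨(-1:ℂ)^(k'+3),
        (fun m => (if ((m:ℕ):ZMod n) = j+1 then 1 else 0)
          + ((if ((m:ℕ):ZMod n) = j - (((k'+2):ℕ):ZMod n) then 1 else 0)
            + (if ((m:ℕ):ZMod n) = j - (((k'+2):ℕ):ZMod n) + 2 then 1 else 0))), ?_, ?_⟩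
      · rcases Nat.even_or_odd (k'+3) with h | h
        · exact Or.inl h.neg_one_pow
        · exact Or.inr h.neg_one_pow
      intro v hv
      rw [laurent_eval hn0 v hv]
      set κ : ZMod n := (((k'+2):ℕ) : ZMod n) with hκ
      have hB1 : j.val % (k'+2) = 1 := by rw [hB, h1K]
      -- congruence conditions
      have hcj1 : (j + 1).val % (k'+2) = 2 % (k'+2) := by
        rw [show (1 : ZMod n) = ((1:ℕ) : ZMod n) from (Nat.cast_one).symm, zval hn0 hkn,
          ← Nat.mod_add_mod, hB1]
      have hcjk1 : (j - κ + 1).val % (k'+2) = 2 % (k'+2) := by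
        rw [hκ, show (1 : ZMod n) = ((1:ℕ) : ZMod n) from (Nat.cast_one).symm,
          zvalk (by omega) hr hn, ← Nat.mod_add_mod, hB1]
      have hne21 : ∀ {x : ZMod n}, x.val % (k'+2) = 2 % (k'+2)
          → ¬(x.val % (k'+2) = 1 % (k'+2)) := by
        intro x hx
        rw [hx]; exact h21
      -- values of the Artin generator
      have hwj : artin (k'+2) n 1 v j = v (j + 1) := by
        simp only [artin]; rw [if_pos hB]
      have hwj1 : artin (k'+2) n 1 v (j+1)
          = colDet (fun s : Fin (k'+2) => if (s:ℕ) = 0 then v j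
              else v (j + 1 + ((s:ℕ) : ZMod n))) • v (j+1)
            - frozen (k'+2) n v (j+1) • v j := by
        simp only [artin]
        rw [if_neg (hne21 hcj1), if_pos (show (j+1).val % (k'+2) = (1+1) % (k'+2) from hcj1)]
        simp only [add_sub_cancel_right]
      have hwjk1 : artin (k'+2) n 1 v (j - κ + 1)
          = colDet (fun s : Fin (k'+2) => if (s:ℕ) = 0 then v (j - κ)
              else v (j - κ + 1 + ((s:ℕ) : ZMod n))) • v (j - κ + 1)
            - frozen (k'+2) n v (j - κ + 1) • v (j - κ) := by
        simp only [artin]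
        rw [if_neg (hne21 hcjk1),
          if_pos (show (j - κ + 1).val % (k'+2) = (1+1) % (k'+2) from hcjk1)]
        simp only [add_sub_cancel_right]
      have hwother : ∀ t : Fin (k'+2), 2 ≤ (t:ℕ) →
          artin (k'+2) n 1 v (j - κ + ((t:ℕ) : ZMod n)) = v (j - κ + ((t:ℕ) : ZMod n)) := by
        intro t ht
        have htlt := t.isLt
        have hval : (j - κ + ((t:ℕ):ZMod n)).val % (k'+2) = (1 + (t:ℕ)) % (k'+2) := by
          rw [hκ, zvalk (by omega) hr hn, ← Nat.mod_add_mod, hB1]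
        have hne1 : ¬((1 + (t:ℕ)) % (k'+2) = 1 % (k'+2)) := by
          rw [h1K]
          rcases Nat.lt_or_ge (1 + (t:ℕ)) (k'+2) with h | h
          · rw [Nat.mod_eq_of_lt h]; omega
          · rw [show 1 + (t:ℕ) = k'+2 from by omega, Nat.mod_self]; omega
        have hne2 : ¬((1 + (t:ℕ)) % (k'+2) = (1+1) % (k'+2)) := by
          rw [show ((1+1 : ℕ)) = 2 from rfl, Nat.mod_eq_of_lt (show 2 < k'+2 by omega)]
          rcases Nat.lt_or_ge (1 + (t:ℕ)) (k'+2) with h | h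
          · rw [Nat.mod_eq_of_lt h]; omega
          · rw [show 1 + (t:ℕ) = k'+2 from by omega, Nat.mod_self]; omega
        simp only [artin]
        rw [if_neg (by rw [hval]; exact hne1), if_neg (by rw [hval]; exact hne2)]
      -- the base tuple and the bilinear determinant form
      set base : Fin (k'+2) → Fin (k'+2) → ℂ :=
        fun t => v (j - κ + ((t:ℕ) : ZMod n)) with hbase
      set Fm : (Fin (k'+2) → ℂ) → (Fin (k'+2) → ℂ) → ℂ := fun x y =>
        Matrix.detRowAlternating (Function.update (Function.update base 1 y) 0 x) with hFm
      have hFdef : ∀ x y, Fm x y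
          = Matrix.detRowAlternating (Function.update (Function.update base 1 y) 0 x) :=
        fun _ _ => rfl
      have htuple : ∀ X : Fin (k'+2) → ℂ,
          (fun s : Fin (k'+2) => if (s:ℕ) = 0 then X
              else artin (k'+2) n 1 v (j - κ + ((s:ℕ) : ZMod n)))
            = Function.update (Function.update base 1 (artin (k'+2) n 1 v (j - κ + 1))) 0 X := by
        intro X
        funext t
        simp only [upd_eval]
        by_cases h0 : (t:ℕ) = 0
        · rw [if_pos h0, if_pos h0]
        · rw [if_neg h0, if_neg h0]
          by_cases h1 : (t:ℕ) = 1
          · rw [if_pos h1]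
            congr 1
            rw [h1, Nat.cast_one]
          · rw [if_neg h1]
            simp only [hbase]
            exact hwother t (by omega)
      have hAeq : colDet (fun s : Fin (k'+2) => if (s:ℕ) = 0 then artin (k'+2) n 1 v (j+1)
            else artin (k'+2) n 1 v (j - κ + ((s:ℕ) : ZMod n)))
          = Fm (artin (k'+2) n 1 v (j+1)) (artin (k'+2) n 1 v (j - κ + 1)) := by
        rw [htuple, colDet_alt, hFdef]
      have hBeq : colDet (fun s : Fin (k'+2) => if (s:ℕ) = 0 then artin (k'+2) n 1 v j
            else artin (k'+2) n 1 v (j - κ + ((s:ℕ) : ZMod n)))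
          = Fm (artin (k'+2) n 1 v j) (artin (k'+2) n 1 v (j - κ + 1)) := by
        rw [htuple, colDet_alt, hFdef]
      -- names for the four scalars
      set α := colDet (fun s : Fin (k'+2) => if (s:ℕ) = 0 then v j
        else v (j + 1 + ((s:ℕ) : ZMod n))) with hα
      set β := frozen (k'+2) n v (j+1) with hβ
      set γ := colDet (fun s : Fin (k'+2) => if (s:ℕ) = 0 then v (j - κ)
        else v (j - κ + 1 + ((s:ℕ) : ZMod n))) with hγ
      set δ := frozen (k'+2) n v (j - κ + 1) with hδ
      -- bilinearity
      have hFsub1 : ∀ (p q : ℂ) (x x' y : Fin (k'+2) → ℂ),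
          Fm (p • x - q • x') y = p * Fm x y - q * Fm x' y := by
        intro p q x x' y
        have e1 := (Matrix.detRowAlternating :
            (Fin (k'+2) → ℂ) [⋀^Fin (k'+2)]→ₗ[ℂ] ℂ).map_update_sub
          (Function.update base 1 y) 0 (p • x) (q • x')
        have e2 := (Matrix.detRowAlternating :
            (Fin (k'+2) → ℂ) [⋀^Fin (k'+2)]→ₗ[ℂ] ℂ).map_update_smul
          (Function.update base 1 y) 0 p x
        have e3 := (Matrix.detRowAlternating :
            (Fin (k'+2) → ℂ) [⋀^Fin (k'+2)]→ₗ[ℂ] ℂ).map_update_smul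
          (Function.update base 1 y) 0 q x'
        rw [hFdef, e1, e2, e3, ← hFdef x y, ← hFdef x' y, smul_eq_mul, smul_eq_mul]
      have hFsub2 : ∀ (p q : ℂ) (x y y' : Fin (k'+2) → ℂ),
          Fm x (p • y - q • y') = p * Fm x y - q * Fm x y' := by
        intro p q x y y'
        have hcomm : ∀ z : Fin (k'+2) → ℂ, Function.update (Function.update base 1 z) 0 x
            = Function.update (Function.update base 0 x) 1 z := fun z =>
          Function.update_comm (show (1:Fin (k'+2)) ≠ 0 from h01F.symm) z x base
        have e1 := (Matrix.detRowAlternating :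
            (Fin (k'+2) → ℂ) [⋀^Fin (k'+2)]→ₗ[ℂ] ℂ).map_update_sub
          (Function.update base 0 x) 1 (p • y) (q • y')
        have e2 := (Matrix.detRowAlternating :
            (Fin (k'+2) → ℂ) [⋀^Fin (k'+2)]→ₗ[ℂ] ℂ).map_update_smul
          (Function.update base 0 x) 1 p y
        have e3 := (Matrix.detRowAlternating :
            (Fin (k'+2) → ℂ) [⋀^Fin (k'+2)]→ₗ[ℂ] ℂ).map_update_smul
          (Function.update base 0 x) 1 q y'
        rw [hFdef, hcomm, e1, e2, e3,
          ← hcomm y, ← hcomm y', ← hFdef x y, ← hFdef x y', smul_eq_mul, smul_eq_mul]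
      have hanti : ∀ x y : Fin (k'+2) → ℂ, Fm y x = - Fm x y := by
        intro x y
        rw [hFdef, hFdef]
        exact det_anti base x y
      -- γ and δ as values of Fm
      have hpermγ : (fun s : Fin (k'+2) => if (s:ℕ) = 0 then v (j - κ)
            else v (j - κ + 1 + ((s:ℕ) : ZMod n)))
          = (Function.update (Function.update base 1 (v j)) 0 (v (j - κ)))
              ∘ (Equiv.swap 0 1) ∘ (finRotate (k'+2)) := by
        funext s
        by_cases h0 : (s:ℕ) = 0
        · rw [if_pos h0, cyc0 _ _ _ _ h0]
        · rw [if_neg h0]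
          by_cases hlast : (s:ℕ) = k'+1
          · rw [cyclast _ _ _ _ hlast]
            congr 1
            rw [hlast, hκ]
            push_cast
            ring
          · have hlt : (s:ℕ)+1 < k'+2 := by have := s.isLt; omega
            rw [cycmid _ _ _ _ h0 hlt]
            simp only [hbase, Fin.val_mk]
            congr 1
            push_cast
            ring
      have hγF : γ = (-1:ℂ)^(k'+2) * Fm (v (j - κ)) (v j) := by
        rw [hγ, colDet_alt, hpermγ, det_cycle, hFdef]
      have hpermδ : (fun s : Fin (k'+2) => v (j - κ + 1 + ((s:ℕ) : ZMod n)))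
          = (Function.update (Function.update base 1 (v j)) 0 (v (j - κ + 1)))
              ∘ (Equiv.swap 0 1) ∘ (finRotate (k'+2)) := by
        funext s
        by_cases h0 : (s:ℕ) = 0
        · rw [cyc0 _ _ _ _ h0]
          congr 1
          rw [h0]
          push_cast
          ring
        · by_cases hlast : (s:ℕ) = k'+1
          · rw [cyclast _ _ _ _ hlast]
            congr 1
            rw [hlast, hκ]
            push_cast
            ring
          · have hlt : (s:ℕ)+1 < k'+2 := by have := s.isLt; omega
            rw [cycmid _ _ _ _ h0 hlt]
            simp only [hbase, Fin.val_mk]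
            congr 1
            push_cast
            ring
      have hδF : δ = (-1:ℂ)^(k'+2) * Fm (v (j - κ + 1)) (v j) := by
        rw [hδ]
        simp only [frozen]
        rw [colDet_alt, hpermδ, det_cycle, hFdef]
      -- frozen minors as values of Fm
      have hFab : frozen (k'+2) n v (j - κ) = Fm (v (j - κ)) (v (j - κ + 1)) := by
        have h1 : (fun t : Fin (k'+2) => v (j - κ + ((t:ℕ):ZMod n)))
            = Function.update (Function.update base 1 (v (j - κ + 1))) 0 (v (j - κ)) := by
          funext t
          simp only [upd_eval]
          by_cases h0 : (t:ℕ) = 0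
          · rw [if_pos h0]
            congr 1
            rw [h0]
            push_cast
            ring
          · rw [if_neg h0]
            by_cases h1 : (t:ℕ) = 1
            · rw [if_pos h1]
              congr 1
              rw [h1]
              push_cast
              ring
            · rw [if_neg h1]
        simp only [frozen]
        rw [colDet_alt, h1, hFdef]
      have hpermcd : (fun s : Fin (k'+2) => v (j - κ + 2 + ((s:ℕ) : ZMod n)))
          = (Function.update (Function.update base 1 (v (j+1))) 0 (v j))
              ∘ (finRotate (k'+2)) ∘ (finRotate (k'+2)) := by
        funext s
        have hslt := s.isLt
        by_cases hk0 : (s:ℕ) = k'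
        · rw [rot2k _ _ _ _ hk0]
          congr 1
          rw [hk0, hκ]
          push_cast
          ring
        · by_cases hlast : (s:ℕ) = k'+1
          · rw [rot2last _ _ _ _ hlast]
            congr 1
            rw [hlast, hκ]
            push_cast
            ring
          · have hlt : (s:ℕ)+2 < k'+2 := by omega
            rw [rot2mid _ _ _ _ hlt]
            simp only [hbase, Fin.val_mk]
            congr 1
            push_cast
            ring
      have hFcd : frozen (k'+2) n v (j - κ + 2) = Fm (v j) (v (j+1)) := by
        simp only [frozen]
        rw [colDet_alt, hpermcd, det_rot2, hFdef]
      -- Pluecker relation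
      set u : Fin (k'+2) → Fin (k'+2) → ℂ :=
        fun s => if h : (s:ℕ)+1 < k'+2 then base ⟨(s:ℕ)+1, h⟩ else v j with hu
      have hueq : (fun s : Fin (k'+2) => v (j - κ + 1 + ((s:ℕ):ZMod n))) = u := by
        funext s
        simp only [hu]
        by_cases h : (s:ℕ)+1 < k'+2
        · rw [dif_pos h]
          simp only [hbase, Fin.val_mk]
          congr 1
          push_cast
          ring
        · rw [dif_neg h]
          have hs : (s:ℕ) = k'+1 := by have := s.isLt; omega
          congr 1
          rw [hs, hκ]
          push_cast
          ring
      have hdet1 : Matrix.det (Matrix.of u) = δ := by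
        rw [hδ]
        simp only [frozen]
        rw [colDet_alt, hueq]
        rfl
      have hdetu : Matrix.det (Matrix.of u) ≠ 0 := by
        rw [hdet1, hδ]
        exact hv _
      have hP0 := pluecker base (v j) (v (j+1)) Fm hFdef u (fun s => by rw [hu]) hdetu
      have hb0 : base 0 = v (j - κ) := by
        simp only [hbase, Fin.val_zero, Nat.cast_zero, add_zero]
      have hb1 : base 1 = v (j - κ + 1) := by
        simp only [hbase, Fin.val_one, Nat.cast_one]
      rw [hb0, hb1] at hP0
      -- assemble
      simp only [tauMap]
      rw [if_neg hA, if_pos hB, hAeq, hBeq, hwj, hwj1, hwjk1,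
        hFsub1, hFsub2, hFsub2]
      rw [hγF, hδF,
        hanti (v (j - κ + 1)) (v (j+1)), hanti (v (j - κ)) (v (j+1)),
        hanti (v (j - κ + 1)) (v j), hanti (v (j - κ)) (v j),
        hFab, hFcd,
        show ((-1:ℂ))^(k'+3) = -(((-1:ℂ))^(k'+2)) from by rw [pow_succ]; ring]
      match_scalars
      · ring
      · linear_combination (β * (-1:ℂ)^(k'+2)) * hP0
    · -- easy case : j ≢ 1, 2 (mod k)
      refine ⟨1, 0, Or.inl rfl, fun v hv => ?_⟩
      have hl : laurent (k'+2) n 0 v = 1 := by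
        unfold laurent; simp
      rw [hl, mul_one, one_smul]
      simp only [tauMap]
      rw [if_neg hA, if_neg hB]
      simp only [artin]
      rw [if_neg hB, if_neg (show ¬((ZMod.val j) % (k'+2) = (1+1) % (k'+2)) from hA)]

end
end

section
/- Partial-wedge formula for the flag-to-vectors map Φ (the computational content of 'Ψ ∘ Φ is the identity up to frozen variables' in the proof of Theorem 7.2): Let k ≥ 2 and let f_1,…,f_{k−1} and g_1,…,g_{k−1} be vectors of ℂ^k. Define u_1 := f_1 and, for 2 ≤ a ≤ k−1, u_a := (f_1 f_2 ⋯ f_a) ∩ (g_1 g_2 ⋯ g_{k+1−a}) (the degree-one Grassmann–Cayley meet). Then for every 1 ≤ a ≤ k−1, the following identity holds in the a-th exterior power of ℂ^k: u_1 ∧ u_2 ∧ ⋯ ∧ u_a = (∏_{j=1}^{a−1} det(f_1 | ⋯ | f_j | g_1 | ⋯ | g_{k−j})) · (f_1 ∧ f_2 ∧ ⋯ ∧ f_a). -/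
open scoped BigOperators

noncomputable section

/-- `uVec k f g a` is the vector `u_{a+1}`: `u_1 = f_1`, and for `2 ≤ a ≤ k−1`,
`u_a = (f_1 ⋯ f_a) ∩ (g_1 ⋯ g_{k+1−a})` (degree-one Grassmann–Cayley meet). -/
def uVec (k : ℕ) (f g : Fin (k - 1) → Fin k → ℂ) : Fin (k - 1) → Fin k → ℂ :=
  fun a =>
    if ha : (a : ℕ) = 0 then f a
    else
      gcMeet
        (fun m : Fin ((a : ℕ) + 1) =>
          f ⟨(m : ℕ), by have := m.isLt; have := a.isLt; omega⟩)
        (fun m : Fin (k - (a : ℕ)) =>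
          g ⟨(m : ℕ), by have := m.isLt; have := a.isLt; omega⟩)

/-- `mixDet k f g j` is the determinant `det(f_1 | ⋯ | f_j | g_1 | ⋯ | g_{k−j})`
(intended for `1 ≤ j ≤ k − 1`). -/
def mixDet (k : ℕ) (f g : Fin (k - 1) → Fin k → ℂ) (j : ℕ) : ℂ :=
  colDet (fun c : Fin k =>
    if hc : (c : ℕ) < j then
      (if h2 : (c : ℕ) < k - 1 then f ⟨(c : ℕ), h2⟩ else 0)
    else
      (if h3 : (c : ℕ) - j < k - 1 then g ⟨(c : ℕ) - j, h3⟩ else 0))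


open ExteriorAlgebra in
lemma prod_mul_ι_self {k n : ℕ} (v : Fin n → Fin k → ℂ) (i : Fin n) :
    (List.ofFn fun m => ι ℂ (v m)).prod * ι ℂ (v i) = 0 := by
  have h := (ιMulti ℂ (n+1) (M := Fin k → ℂ)).map_eq_zero_of_eq
      (Fin.snoc v (v i))
      (i := Fin.castSucc i) (j := Fin.last n)
      (by simp) (Fin.ne_of_lt (Fin.castSucc_lt_last i))
  rw [ιMulti_apply, List.ofFn_succ'] at h
  simpa using h

open ExteriorAlgebra in
lemma step_lemma {k : ℕ} (hk : 2 ≤ k) (f g : Fin (k-1) → Fin k → ℂ)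
    (n : ℕ) (hn : 1 ≤ n) (hnk : n < k - 1) :
    (List.ofFn fun i : Fin n => ι ℂ (f ⟨i, Nat.lt_trans i.isLt hnk⟩)).prod
        * ι ℂ (uVec k f g ⟨n, hnk⟩)
      = mixDet k f g n •
        ((List.ofFn fun i : Fin n => ι ℂ (f ⟨i, Nat.lt_trans i.isLt hnk⟩)).prod
          * ι ℂ (f ⟨n, hnk⟩)) := by
  have hne : ¬ ((⟨n, hnk⟩ : Fin (k-1)) : ℕ) = 0 := by show ¬ n = 0; omega
  simp only [uVec, gcMeet]
  rw [dif_neg hne]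
  rw [map_sum, Finset.mul_sum, Fin.sum_univ_castSucc]
  simp only [Fin.coe_castSucc, Fin.val_last, Nat.add_sub_cancel, Nat.sub_self,
    pow_zero, one_mul, map_smul, mul_smul_comm]
  have hz : ∀ i : Fin n,
      (List.ofFn fun i : Fin n => ι ℂ (f ⟨i, Nat.lt_trans i.isLt hnk⟩)).prod
        * ι ℂ (f ⟨(i : ℕ), Nat.lt_trans i.isLt hnk⟩) = 0 :=
    fun i => prod_mul_ι_self (fun m : Fin n => f ⟨m, Nat.lt_trans m.isLt hnk⟩) i
  rw [Finset.sum_eq_zero (fun i _ => by rw [hz i, smul_zero]), zero_add]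
  congr 1
  rw [mixDet]
  congr 1
  funext c
  have hck := c.isLt
  split_ifs <;> first | rfl | omega

/-- Partial-wedge formula for the flag-to-vectors map `Φ` (the computational
content of `Ψ ∘ Φ` being the identity up to frozen variables, from the proof of
Theorem 7.2): in the exterior algebra of `ℂ^k`,
`u_1 ∧ ⋯ ∧ u_a = (∏_{j=1}^{a−1} det(f_1|⋯|f_j|g_1|⋯|g_{k−j})) • (f_1 ∧ ⋯ ∧ f_a)`. -/
theorem partial_wedge_formula
    (k : ℕ) (hk : 2 ≤ k) (f g : Fin (k - 1) → Fin k → ℂ)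
    (a : ℕ) (ha1 : 1 ≤ a) (ha2 : a ≤ k - 1) :
    (List.ofFn fun m : Fin a =>
        ExteriorAlgebra.ι ℂ
          (uVec k f g ⟨(m : ℕ), by have := m.isLt; omega⟩)).prod
      = (∏ j ∈ Finset.range (a - 1), mixDet k f g (j + 1)) •
        (List.ofFn fun m : Fin a =>
          ExteriorAlgebra.ι ℂ (f ⟨(m : ℕ), by have := m.isLt; omega⟩)).prod := by
  induction a with
  | zero => omega
  | succ n ih =>
    rcases Nat.lt_or_ge n 1 with h1 | h1
    · have hn : n = 0 := by omega
      subst hn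
      simp [uVec]
    · have hnk : n < k - 1 := by omega
      have ihn := ih h1 (by omega)
      simp only [List.ofFn_succ', List.concat_eq_append, List.prod_append,
        List.prod_cons, List.prod_nil, mul_one, Fin.coe_castSucc, Fin.val_last,
        Nat.add_sub_cancel]
      rw [ihn, smul_mul_assoc, step_lemma hk f g n h1 hnk, smul_smul]
      congr 1
      obtain ⟨m, rfl⟩ : ∃ m, n = m + 1 := ⟨n - 1, by omega⟩
      simp [Finset.prod_range_succ]

end
end

section
/- Determinant of the flag-to-vectors window (the computational content of 'Φ* sends a frozen Plücker coordinate to a product of k−1 frozen Fock–Goncharov coordinates' in the proof of Theorem 7.2): Let k ≥ 2 and let f_1,…,f_{k−1} and g_1,…,g_{k−1} be vectors of ℂ^k. Define u_1 := f_1, u_a := (f_1 f_2 ⋯ f_a) ∩ (g_1 g_2 ⋯ g_{k+1−a}) (the degree-one Grassmann–Cayley meet) for 2 ≤ a ≤ k−1, and u_k := g_1. Then det(u_1 | u_2 | ⋯ | u_k) = ∏_{j=1}^{k−1} det(f_1 | ⋯ | f_j | g_1 | ⋯ | g_{k−j}). -/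
open scoped BigOperators

noncomputable section

/-- The matrix with columns `f_1, …, f_{k-1}, g_1`. -/
def Fmat (k : ℕ) (hk : 2 ≤ k) (f g : Fin (k - 1) → Fin k → ℂ) : Matrix (Fin k) (Fin k) ℂ :=
  Matrix.of fun a i =>
    if hi : (i : ℕ) < k - 1 then f ⟨(i : ℕ), hi⟩ a else g ⟨0, (by omega : 1 ≤ k - 1)⟩ a

/-- The upper-triangular change-of-basis matrix. -/
def Mmat (k : ℕ) (f g : Fin (k - 1) → Fin k → ℂ) : Matrix (Fin k) (Fin k) ℂ :=
  Matrix.of fun i b =>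
    if hb0 : (b : ℕ) = 0 then (if (i : ℕ) = 0 then (1 : ℂ) else 0)
    else if hbk : (b : ℕ) = k - 1 then (if (i : ℕ) = k - 1 then (1 : ℂ) else 0)
    else if hib : (i : ℕ) ≤ (b : ℕ) then
      (-1 : ℂ) ^ ((b : ℕ) - (i : ℕ)) *
        colDet (fun c : Fin k =>
          if hc : (c : ℕ) < (b : ℕ) then
            (if hci : (c : ℕ) < (i : ℕ) then
              f ⟨(c : ℕ), by have := b.isLt; omega⟩
             else f ⟨(c : ℕ) + 1, by have := b.isLt; omega⟩)
          else if hq : (c : ℕ) - (b : ℕ) < k - (b : ℕ) then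
            g ⟨(c : ℕ) - (b : ℕ), by have := b.isLt; have := c.isLt; omega⟩
          else 0)
    else 0

/-- The coefficient of `f_j` in the middle columns, as a function of `ℕ`. -/
def Tcoef (k : ℕ) (f g : Fin (k - 1) → Fin k → ℂ) (bv : ℕ) (a : Fin k) (j : ℕ) : ℂ :=
  if h : j ≤ bv ∧ 0 < bv ∧ bv < k - 1 then
    ((-1 : ℂ) ^ (bv - j) *
      colDet (fun c : Fin k =>
        if hc : (c : ℕ) < bv then
          (if hci : (c : ℕ) < j then f ⟨(c : ℕ), by omega⟩
           else f ⟨(c : ℕ) + 1, by omega⟩)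
        else if hq : (c : ℕ) - bv < k - bv then
          g ⟨(c : ℕ) - bv, by have := c.isLt; omega⟩
        else 0)) * f ⟨j, by omega⟩ a
  else 0

lemma lemA (k : ℕ) (hk : 2 ≤ k) (f g : Fin (k - 1) → Fin k → ℂ) (a b i : Fin k)
    (hb0 : ¬ (b : ℕ) = 0) (hbk : ¬ (b : ℕ) = k - 1) :
    Fmat k hk f g a i * Mmat k f g i b = Tcoef k f g (b : ℕ) a (i : ℕ) := by
  simp only [Fmat, Mmat, Matrix.of_apply]
  rw [dif_neg hb0, dif_neg hbk]
  by_cases hib : (i : ℕ) ≤ (b : ℕ)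
  · rw [dif_pos hib, dif_pos (show (i : ℕ) < k - 1 by have := b.isLt; omega)]
    rw [Tcoef, dif_pos ⟨hib, by omega, by have := b.isLt; omega⟩]
    rw [mul_comm]
  · rw [dif_neg hib, mul_zero, Tcoef, dif_neg (by omega)]

lemma lemB (k : ℕ) (f g : Fin (k - 1) → Fin k → ℂ) (bv : ℕ) (h0 : 0 < bv)
    (hbv : bv < k - 1) (a : Fin k) :
    uVec k f g ⟨bv, hbv⟩ a = ∑ j ∈ Finset.range (bv + 1), Tcoef k f g bv a j := by
  rw [← Fin.sum_univ_eq_sum_range (fun j => Tcoef k f g bv a j) (bv + 1)]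
  simp only [uVec, gcMeet, Fin.val_mk, Finset.sum_apply, Pi.smul_apply, smul_eq_mul]
  rw [dif_neg (by omega : ¬ bv = 0)]
  simp only [gcMeet, Fin.val_mk, Finset.sum_apply, Pi.smul_apply, smul_eq_mul]
  refine Finset.sum_congr rfl fun i _ => ?_
  rw [Tcoef, dif_pos ⟨Nat.lt_succ_iff.mp i.isLt, h0, hbv⟩]
  rfl

lemma lemDiag (k : ℕ) (f g : Fin (k - 1) → Fin k → ℂ) (i : Fin k) :
    Mmat k f g i i =
      (fun j : ℕ => if j = 0 ∨ j = k - 1 then (1 : ℂ) else mixDet k f g j) (i : ℕ) := by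
  simp only [Mmat, Matrix.of_apply]
  by_cases h0 : (i : ℕ) = 0
  · rw [dif_pos h0, if_pos h0, if_pos (Or.inl h0)]
  · rw [dif_neg h0]
    by_cases hk1 : (i : ℕ) = k - 1
    · rw [dif_pos hk1, if_pos hk1, if_pos (Or.inr hk1)]
    · rw [dif_neg hk1, dif_pos (le_refl _), if_neg (fun h => h.elim h0 hk1)]
      rw [Nat.sub_self, pow_zero, one_mul, mixDet, colDet, colDet]
      congr 1
      ext a c
      simp only [Matrix.of_apply]
      by_cases hc : (c : ℕ) < (i : ℕ)
      · rw [dif_pos hc, dif_pos hc, dif_pos hc,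
          dif_pos (show (c : ℕ) < k - 1 by have := i.isLt; omega)]
      · rw [dif_neg hc, dif_neg hc,
          dif_pos (show (c : ℕ) - (i : ℕ) < k - (i : ℕ) by
            have := i.isLt; have := c.isLt; omega),
          dif_pos (show (c : ℕ) - (i : ℕ) < k - 1 by
            have := i.isLt; have := c.isLt; omega)]

/-- Determinant of the flag-to-vectors window (the computational content of
`Φ*` sending a frozen Plücker coordinate to a product of `k−1` frozen
Fock–Goncharov coordinates, from the proof of Theorem 7.2):
`det(u_1 | u_2 | ⋯ | u_k) = ∏_{j=1}^{k−1} det(f_1|⋯|f_j|g_1|⋯|g_{k−j})`,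
where `u_k = g_1`. -/
theorem flag_window_determinant
    (k : ℕ) (hk : 2 ≤ k) (f g : Fin (k - 1) → Fin k → ℂ) :
    colDet (fun c : Fin k =>
        if hc : (c : ℕ) < k - 1 then uVec k f g ⟨(c : ℕ), hc⟩
        else g ⟨0, by omega⟩)
      = ∏ j ∈ Finset.range (k - 1), mixDet k f g (j + 1) := by
  have hM : (Matrix.of fun a b : Fin k =>
      (if hc : (b : ℕ) < k - 1 then uVec k f g ⟨(b : ℕ), hc⟩
        else g ⟨0, by omega⟩) a) = Fmat k hk f g * Mmat k f g := by
    ext a b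
    rw [Matrix.mul_apply, Matrix.of_apply]
    by_cases hb0 : (b : ℕ) = 0
    · rw [dif_pos (show (b : ℕ) < k - 1 by omega)]
      rw [Finset.sum_eq_single (⟨0, by omega⟩ : Fin k)]
      · simp only [Fmat, Mmat, Matrix.of_apply, Fin.val_mk]
        rw [dif_pos hb0, if_pos trivial, mul_one,
          dif_pos (show (0 : ℕ) < k - 1 by omega)]
        rw [show (⟨(b : ℕ), by omega⟩ : Fin (k - 1)) = ⟨0, by omega⟩ from Fin.ext (by simpa using hb0)]
        simp only [uVec, Fin.val_mk]
        rw [dif_pos trivial]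
      · intro j _ hj
        simp only [Mmat, Matrix.of_apply]
        rw [dif_pos hb0, if_neg (fun h => hj (Fin.ext (by simpa using h))), mul_zero]
      · intro h; exact absurd (Finset.mem_univ _) h
    · by_cases hbk : (b : ℕ) = k - 1
      · rw [dif_neg (by omega)]
        rw [Finset.sum_eq_single (⟨k - 1, by omega⟩ : Fin k)]
        · simp only [Fmat, Mmat, Matrix.of_apply, Fin.val_mk]
          rw [dif_neg hb0, dif_pos hbk, if_pos trivial, mul_one, dif_neg (by omega)]
        · intro j _ hj
          simp only [Mmat, Matrix.of_apply]
          rw [dif_neg hb0, dif_pos hbk,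
            if_neg (fun h => hj (Fin.ext (by simpa using h))), mul_zero]
        · intro h; exact absurd (Finset.mem_univ _) h
      · have hbv : (b : ℕ) < k - 1 := by have := b.isLt; omega
        rw [dif_pos hbv, lemB k f g (b : ℕ) (by omega) hbv a]
        rw [Finset.sum_subset (Finset.range_subset_range.2 (by omega : (b : ℕ) + 1 ≤ k))
          (fun j hj hj' => by
            rw [Tcoef, dif_neg (by simp only [Finset.mem_range] at hj'; omega)])]
        rw [← Fin.sum_univ_eq_sum_range (fun j => Tcoef k f g (b : ℕ) a j) k]
        exact Finset.sum_congr rfl fun i _ => (lemA k hk f g a b i hb0 hbk).symm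
  have hF : (Fmat k hk f g).det = mixDet k f g (k - 1) := by
    rw [mixDet, colDet, Fmat]
    congr 1
    ext a c
    simp only [Matrix.of_apply]
    by_cases hc : (c : ℕ) < k - 1
    · rw [dif_pos hc, dif_pos hc, dif_pos hc]
    · rw [dif_neg hc, dif_neg hc,
        dif_pos (show (c : ℕ) - (k - 1) < k - 1 by have := c.isLt; omega)]
      have hx : (c : ℕ) - (k - 1) = 0 := by have := c.isLt; omega
      simp only [hx]
  have hTri : (Mmat k f g).BlockTriangular id := by
    intro i j hij
    have hij' : (j : ℕ) < (i : ℕ) := hij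
    simp only [Mmat, Matrix.of_apply]
    by_cases h0 : (j : ℕ) = 0
    · rw [dif_pos h0, if_neg (by omega)]
    · rw [dif_neg h0]
      have hjk : ¬ (j : ℕ) = k - 1 := by have := i.isLt; omega
      rw [dif_neg hjk, dif_neg (by omega)]
  have hdetM : (Mmat k f g).det = ∏ j ∈ Finset.range (k - 2), mixDet k f g (j + 1) := by
    rw [Matrix.det_of_upperTriangular hTri]
    rw [Finset.prod_congr rfl (fun i _ => lemDiag k f g i)]
    rw [Fin.prod_univ_eq_prod_range (fun j : ℕ => if j = 0 ∨ j = k - 1 then (1 : ℂ) else mixDet k f g j) k]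
    rw [show Finset.range k = Finset.range ((k - 1) + 1) from by congr 1; omega,
      Finset.prod_range_succ, if_pos (Or.inr rfl), mul_one,
      show Finset.range (k - 1) = Finset.range ((k - 2) + 1) from by congr 1; omega,
      Finset.prod_range_succ', if_pos (Or.inl rfl), mul_one]
    exact Finset.prod_congr rfl fun j hj => by
      simp only [Finset.mem_range] at hj
      rw [if_neg (by omega)]
  have key : colDet (fun c : Fin k =>
        if hc : (c : ℕ) < k - 1 then uVec k f g ⟨(c : ℕ), hc⟩
        else g ⟨0, by omega⟩) = (Fmat k hk f g * Mmat k f g).det := by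
    rw [colDet]; rw [hM]
  rw [key, Matrix.det_mul, hF, hdetM,
    show Finset.range (k - 1) = Finset.range ((k - 2) + 1) from by congr 1; omega,
    Finset.prod_range_succ, show k - 2 + 1 = k - 1 by omega, mul_comm]


end
end

section
/- Span property of the degree-one meet (the geometric property of the Grassmann–Cayley meet used throughout Section 6): Let k ≥ 2, 1 ≤ p ≤ k, and let a_1,…,a_p and b_1,…,b_{k+1−p} be vectors of ℂ^k such that the family (a_1,…,a_p) is linearly independent and the family (b_1,…,b_{k+1−p}) is linearly independent. Let A := span{a_1,…,a_p}, B := span{b_1,…,b_{k+1−p}}, and let w := (a_1⋯a_p) ∩ (b_1⋯b_{k+1−p}) be their degree-one Grassmann–Cayley meet. Then w ≠ 0 if and only if A + B = ℂ^k, and in that case span{w} = A ∩ B. -/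
open scoped BigOperators

noncomputable section

lemma colDet_eq_det {k : ℕ} (c : Fin k → Fin k → ℂ) :
    colDet c = (Pi.basisFun ℂ (Fin k)).det c := by
  rw [Pi.basisFun_det]
  show Matrix.det _ = Matrix.detRowAlternating c
  rw [show (Matrix.of fun a b => c b a) = Matrix.transpose (Matrix.of c) from rfl,
    Matrix.det_transpose]
  rfl

lemma colDet_ne_zero_iff {k : ℕ} (c : Fin k → Fin k → ℂ) :
    colDet c ≠ 0 ↔ LinearIndependent ℂ c ∧ Submodule.span ℂ (Set.range c) = ⊤ := by
  rw [colDet_eq_det, ← isUnit_iff_ne_zero, ← Module.Basis.is_basis_iff_det]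

lemma syzygy {k : ℕ} (v : Fin (k+1) → Fin k → ℂ) (c : Fin k) :
    ∑ i : Fin (k+1), (-1:ℂ)^(i:ℕ) * colDet (fun j => v (i.succAbove j)) * v i c = 0 := by
  set P : Matrix (Fin (k+1)) (Fin (k+1)) ℂ :=
    Matrix.of (fun r s => Fin.lastCases (motive := fun _ => ℂ) (v s c)
      (fun r' => v s r') r) with hP
  have hdet : P.det = 0 := by
    apply Matrix.det_zero_of_row_eq (i := Fin.castSucc c) (j := Fin.last k)
    · exact (Fin.castSucc_lt_last c).ne
    · ext s
      simp [hP]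
  rw [Matrix.det_succ_row P (Fin.last k)] at hdet
  have h2 : ∀ j : Fin (k+1), (P.submatrix (Fin.last k).succAbove j.succAbove).det
      = colDet (fun j' => v (j.succAbove j')) := by
    intro j
    rw [Fin.succAbove_last]
    congr 1
    ext r s
    simp [hP, Matrix.submatrix_apply, colDet]
  have h3 : ∀ j : Fin (k+1), P (Fin.last k) j = v j c := by
    intro j; simp [hP]
  simp only [h2, h3, Fin.val_last] at hdet
  have h4 := congrArg (fun x => (-1:ℂ)^k * x) hdet
  simp only [Finset.mul_sum, mul_zero] at h4
  rw [← h4]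
  apply Finset.sum_congr rfl
  intro j _
  rw [← mul_assoc, ← mul_assoc, ← pow_add]
  have : (-1:ℂ)^(k + (k + (j:ℕ))) = (-1:ℂ)^(j:ℕ) := by
    rw [show k + (k + (j:ℕ)) = 2*k + (j:ℕ) by ring, pow_add, pow_mul]
    simp
  rw [this]
  ring

lemma neg_one_pow_sub {m i : ℕ} (h : i ≤ m) : ((-1:ℂ))^(m-i) = (-1)^m * (-1)^i := by
  rw [← pow_add, show m + i = (m - i) + 2*i by omega, pow_add, pow_mul]
  simp


/-- Span property of the degree-one meet: for linearly independent families
`a` (of size `p`) and `b` (of size `k+1−p`), the meet is nonzero iff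
`A + B = ℂ^k`, and in that case it spans `A ∩ B`. -/
theorem meet_span_property
    (k p : ℕ) (hk : 2 ≤ k) (hp1 : 1 ≤ p) (hp2 : p ≤ k)
    (a : Fin p → Fin k → ℂ) (b : Fin (k + 1 - p) → Fin k → ℂ)
    (ha : LinearIndependent ℂ a) (hb : LinearIndependent ℂ b) :
    (gcMeet a b ≠ 0 ↔
      Submodule.span ℂ (Set.range a) ⊔ Submodule.span ℂ (Set.range b) = ⊤) ∧
    (gcMeet a b ≠ 0 →
      Submodule.span ℂ {gcMeet a b}
        = Submodule.span ℂ (Set.range a) ⊓ Submodule.span ℂ (Set.range b)) := by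
  have hq : p + (k + 1 - p) = k + 1 := by omega
  set v : Fin (k+1) → Fin k → ℂ := fun i =>
    if h : (i:ℕ) < p then a ⟨i, h⟩ else b ⟨(i:ℕ) - p, by omega⟩ with hv
  set D : Fin (k+1) → ℂ := fun i => colDet (fun j => v (i.succAbove j)) with hD
  set em : Fin p → Fin (k+1) := fun i => ⟨(i:ℕ), by omega⟩ with hem
  set en : Fin (k + 1 - p) → Fin (k+1) := fun j => ⟨p + (j:ℕ), by omega⟩ with hen
  have hva : ∀ i : Fin p, v (em i) = a i := by
    intro i; simp [hv, hem, i.isLt]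
  have hvb : ∀ j : Fin (k + 1 - p), v (en j) = b j := by
    intro j
    rcases j with ⟨jv, hj⟩
    simp [hv, hen, Nat.add_sub_cancel_left]
  -- the a-side expression of the meet
  have hA : gcMeet a b = ∑ i : Fin p, ((-1:ℂ)^(p-1-(i:ℕ)) * D (em i)) • a i := by
    unfold gcMeet
    apply Finset.sum_congr rfl
    intro i _
    congr 3
    funext col
    rcases lt_or_ge (col:ℕ) (i:ℕ) with hlt | hge
    · have hsa : (em i).succAbove col = Fin.castSucc col := by
        apply Fin.succAbove_of_castSucc_lt
        simpa [Fin.lt_def, hem] using by omega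
      have h1 : (col:ℕ) < p - 1 := by have := i.isLt; omega
      rw [hsa]
      have h2 : ((Fin.castSucc col : Fin (k+1)) : ℕ) < p := by
        simp; omega
      simp only [hv, h1, hlt, dif_pos, if_pos, h2]
      rfl
    · have hsa : (em i).succAbove col = Fin.succ col := by
        apply Fin.succAbove_of_le_castSucc
        simpa [Fin.le_def, hem] using by omega
      rw [hsa]
      rcases lt_or_ge (col:ℕ) (p-1) with h1 | h1
      · have h2 : ((Fin.succ col : Fin (k+1)) : ℕ) < p := by simp; omega
        have h3 : ¬ ((col:ℕ) < (i:ℕ)) := by omega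
        simp only [hv, h1, dif_pos, h3, if_neg, not_false_iff, h2]
        rfl
      · have h2 : ¬ (((Fin.succ col : Fin (k+1)) : ℕ) < p) := by simp; omega
        have h3 : ¬ ((col:ℕ) < p - 1) := by omega
        have h4 : (col:ℕ) - (p-1) < (k + 1 - p) := by have := col.isLt; omega
        simp only [hv, h3, dif_neg, not_false_iff, h4, dif_pos, h2]
        exact congrArg b (Fin.ext (by simp only [Fin.val_succ]; omega))
  -- split of the syzygy sum
  have hsplit : ∀ c : Fin k,
      (∑ i : Fin p, (-1:ℂ)^(i:ℕ) * D (em i) * a i c)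
        + (∑ j : Fin (k + 1 - p), (-1:ℂ)^(p+(j:ℕ)) * D (en j) * b j c) = 0 := by
    intro c
    have hs := syzygy v c
    have e1 : ∑ i : Fin (p+(k + 1 - p)), ((-1:ℂ)^((Fin.cast hq i : Fin (k+1)):ℕ)
          * D (Fin.cast hq i) * v (Fin.cast hq i) c)
        = ∑ i : Fin (k+1), (-1:ℂ)^(i:ℕ) * D i * v i c := by
      exact Fintype.sum_equiv (finCongr hq) _ _ (fun i => rfl)
    rw [Fin.sum_univ_add] at e1
    have e2 : ∀ i : Fin p, Fin.cast hq (Fin.castAdd (k + 1 - p) i) = em i := fun i => Fin.ext rfl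
    have e3 : ∀ j : Fin (k + 1 - p), Fin.cast hq (Fin.natAdd p j) = en j := fun j => Fin.ext rfl
    simp only [e2, e3] at e1
    have e4 : ∀ i : Fin p, ((em i : Fin (k+1)) : ℕ) = (i:ℕ) := fun i => rfl
    have e5 : ∀ j : Fin (k + 1 - p), ((en j : Fin (k+1)) : ℕ) = p + (j:ℕ) := fun j => rfl
    simp only [e4, e5, hva, hvb] at e1
    rw [e1]
    exact hs
  -- the b-side expression of the meet
  have hB : gcMeet a b
      = ∑ j : Fin (k + 1 - p), (-((-1:ℂ)^(p-1) * ((-1:ℂ)^(p+(j:ℕ)) * D (en j)))) • b j := by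
    funext c
    have h1 : gcMeet a b c = ∑ i : Fin p, ((-1:ℂ)^(p-1-(i:ℕ)) * D (em i)) * a i c := by
      rw [hA]; simp [Finset.sum_apply]
    have h2 : ∀ i : Fin p, ((-1:ℂ)^(p-1-(i:ℕ)) * D (em i)) * a i c
        = (-1:ℂ)^(p-1) * ((-1:ℂ)^(i:ℕ) * D (em i) * a i c) := by
      intro i
      rw [neg_one_pow_sub (by have := i.isLt; omega : (i:ℕ) ≤ p - 1)]
      ring
    rw [h1, Finset.sum_congr rfl (fun i _ => h2 i), ← Finset.mul_sum]
    have h3 : ∑ i : Fin p, (-1:ℂ)^(i:ℕ) * D (em i) * a i c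
        = - ∑ j : Fin (k + 1 - p), (-1:ℂ)^(p+(j:ℕ)) * D (en j) * b j c := by
      exact eq_neg_of_add_eq_zero_left (hsplit c)
    rw [h3]
    simp only [Finset.sum_apply, Pi.smul_apply, smul_eq_mul]
    rw [mul_neg, Finset.mul_sum, ← Finset.sum_neg_distrib]
    exact Finset.sum_congr rfl fun j _ => by ring
  -- memberships
  have hWA : gcMeet a b ∈ Submodule.span ℂ (Set.range a) := by
    rw [hA]
    exact Submodule.sum_mem _ fun i _ =>
      Submodule.smul_mem _ _ (Submodule.subset_span ⟨i, rfl⟩)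
  have hWB : gcMeet a b ∈ Submodule.span ℂ (Set.range b) := by
    rw [hB]
    exact Submodule.sum_mem _ fun j _ =>
      Submodule.smul_mem _ _ (Submodule.subset_span ⟨j, rfl⟩)
  -- if the meet vanishes, all maximal minors vanish
  have hDz : gcMeet a b = 0 → ∀ i : Fin (k+1), D i = 0 := by
    intro h0 i
    have hA0 : ∑ i : Fin p, ((-1:ℂ)^(p-1-(i:ℕ)) * D (em i)) • a i = 0 := by
      rw [← hA]; exact h0
    have hB0 : ∑ j : Fin (k + 1 - p), (-((-1:ℂ)^(p-1) * ((-1:ℂ)^(p+(j:ℕ)) * D (en j)))) • b j = 0 := by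
      rw [← hB]; exact h0
    have hca := Fintype.linearIndependent_iff.mp ha _ hA0
    have hcb := Fintype.linearIndependent_iff.mp hb _ hB0
    have hne : ∀ m : ℕ, ((-1:ℂ))^m ≠ 0 := fun m =>
      pow_ne_zero _ (neg_ne_zero.mpr one_ne_zero)
    by_cases hip : (i:ℕ) < p
    · have h1 := hca ⟨(i:ℕ), hip⟩
      have h2 : em ⟨(i:ℕ), hip⟩ = i := Fin.ext rfl
      rw [h2] at h1
      rcases mul_eq_zero.mp h1 with h | h
      · exact absurd h (hne _)
      · exact h
    · have hjq : (i:ℕ) - p < (k + 1 - p) := by have := i.isLt; omega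
      have h1 := hcb ⟨(i:ℕ) - p, hjq⟩
      have h2 : en ⟨(i:ℕ) - p, hjq⟩ = i := Fin.ext (by simp [hen]; omega)
      rw [h2] at h1
      have h3 := neg_eq_zero.mp h1
      rcases mul_eq_zero.mp h3 with h | h
      · exact absurd h (hne _)
      · rcases mul_eq_zero.mp h with h' | h'
        · exact absurd h' (hne _)
        · exact h'
  -- if all minors vanish, the meet vanishes
  have hWzero : (∀ i : Fin (k+1), D i = 0) → gcMeet a b = 0 := by
    intro hz
    rw [hA]
    apply Finset.sum_eq_zero
    intro i _
    rw [hz (em i), mul_zero, zero_smul]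
  -- nonvanishing of some minor iff the combined family spans
  have hDtop : (∃ i, D i ≠ 0) ↔ Submodule.span ℂ (Set.range v) = ⊤ := by
    constructor
    · rintro ⟨i, hi⟩
      have h1 := (colDet_ne_zero_iff _).mp hi
      rw [eq_top_iff, ← h1.2]
      apply Submodule.span_mono
      rintro _ ⟨j, rfl⟩
      exact ⟨_, rfl⟩
    · intro htop
      by_contra hno
      push_neg at hno
      have hdep : ¬ LinearIndependent ℂ v := by
        intro hli
        have hc := hli.fintype_card_le_finrank
        rw [Module.finrank_fin_fun, Fintype.card_fin] at hc
        omega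
      obtain ⟨g, hg0, i0, hgi0⟩ := Fintype.not_linearIndependent_iff.mp hdep
      have hvi0 : v i0 ∈ Submodule.span ℂ (Set.range (fun j => v (i0.succAbove j))) := by
        have hsum := Fin.sum_univ_succAbove (fun i => g i • v i) i0
        rw [hg0] at hsum
        have heq : g i0 • v i0 = - ∑ j : Fin k, g (i0.succAbove j) • v (i0.succAbove j) :=
          eq_neg_of_add_eq_zero_left hsum.symm
        have hv0 : v i0 = (g i0)⁻¹ • (g i0 • v i0) := by
          rw [smul_smul, inv_mul_cancel₀ hgi0, one_smul]
        rw [hv0, heq]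
        exact Submodule.smul_mem _ _ (Submodule.neg_mem _ (Submodule.sum_mem _
          fun j _ => Submodule.smul_mem _ _ (Submodule.subset_span ⟨j, rfl⟩)))
      have htop' : Submodule.span ℂ (Set.range (fun j => v (i0.succAbove j))) = ⊤ := by
        rw [eq_top_iff, ← htop]
        apply Submodule.span_le.mpr
        rintro _ ⟨i, rfl⟩
        by_cases hii : i = i0
        · subst hii; exact hvi0
        · obtain ⟨j, hj⟩ := Fin.exists_succAbove_eq hii
          rw [← hj]
          exact Submodule.subset_span ⟨j, rfl⟩
      have hind : LinearIndependent ℂ (fun j => v (i0.succAbove j)) :=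
        linearIndependent_of_top_le_span_of_card_eq_finrank htop'.ge
          (by rw [Module.finrank_fin_fun, Fintype.card_fin])
      exact ((colDet_ne_zero_iff _).mpr ⟨hind, htop'⟩) (hno i0)
  have hrange : Set.range v = Set.range a ∪ Set.range b := by
    ext x
    constructor
    · rintro ⟨i, rfl⟩
      by_cases hip : (i:ℕ) < p
      · left; exact ⟨⟨(i:ℕ), hip⟩, by simp [hv, hip]⟩
      · right; exact ⟨⟨(i:ℕ) - p, by have := i.isLt; omega⟩, by simp [hv, hip]⟩
    · rintro (⟨i, rfl⟩ | ⟨j, rfl⟩)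
      exacts [⟨em i, hva i⟩, ⟨en j, hvb j⟩]
  have hsv : Submodule.span ℂ (Set.range v)
      = Submodule.span ℂ (Set.range a) ⊔ Submodule.span ℂ (Set.range b) := by
    rw [hrange, Submodule.span_union]
  have hiff : gcMeet a b ≠ 0 ↔
      Submodule.span ℂ (Set.range a) ⊔ Submodule.span ℂ (Set.range b) = ⊤ := by
    rw [← hsv, ← hDtop]
    constructor
    · intro hw
      by_contra hno
      push_neg at hno
      exact hw (hWzero hno)
    · rintro ⟨i, hi⟩ hw0
      exact hi (hDz hw0 i)
  refine ⟨hiff, ?_⟩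
  intro hw
  have htop := hiff.mp hw
  have hfr : Module.finrank ℂ
      (Submodule.span ℂ (Set.range a) ⊓ Submodule.span ℂ (Set.range b) :
        Submodule ℂ (Fin k → ℂ)) = 1 := by
    have h1 := Submodule.finrank_sup_add_finrank_inf_eq
      (Submodule.span ℂ (Set.range a)) (Submodule.span ℂ (Set.range b))
    rw [htop, finrank_top, Module.finrank_fin_fun] at h1
    have h2 : Module.finrank ℂ (Submodule.span ℂ (Set.range a)) = p :=
      (finrank_span_eq_card ha).trans (Fintype.card_fin p)
    have h3 : Module.finrank ℂ (Submodule.span ℂ (Set.range b)) = (k + 1 - p) :=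
      (finrank_span_eq_card hb).trans (Fintype.card_fin (k + 1 - p))
    rw [h2, h3] at h1
    omega
  apply Submodule.eq_of_le_of_finrank_eq
  · rw [Submodule.span_le, Set.singleton_subset_iff]
    exact Submodule.mem_inf.mpr ⟨hWA, hWB⟩
  · rw [hfr]
    exact finrank_span_singleton hw

end
end
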